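/- arXiv:1602.04365 — 10 statements merged into one kernel-verified Lean document; each statement's English description precedes it below -/
import Mathlib

section
/- Let p_1 ≥ p_2 ≥ ... ≥ p_n > 0 be a TS instance, let S = p_{⌈n/2⌉+1} + ... + p_n be the total size of the smaller half of the jobs, and let m = p_{(n+1)/2} if n is odd and m = 0 if n is even. Then every feasible schedule has makespan at least m + 2S; in particular OPT(p) ≥ m + 2S. -/
/-- A schedule `s` is feasible for the TS instance given by sizes `p 1 ≥ … ≥ p n > 0`:
start times are nonnegative and any two distinct jobs are separated by at least
the smaller of the two sizes. -/
def Feasible (n : ℕ) (p s : ℕ → ℝ) : Prop :=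
  (∀ j, 1 ≤ j → j ≤ n → 0 ≤ s j) ∧
  ∀ i j, 1 ≤ i → i ≤ n → 1 ≤ j → j ≤ n → i ≠ j → min (p i) (p j) ≤ |s i - s j|

/-- The makespan of a schedule: `max_j (s j + p j)` over jobs `1 ≤ j ≤ n`. -/
noncomputable def makespan (n : ℕ) (p s : ℕ → ℝ) : ℝ :=
  sSup ((fun j => s j + p j) '' Set.Icc 1 n)

/-- `OPT`: the infimum of the makespan over all feasible schedules. -/
noncomputable def OPT (n : ℕ) (p : ℕ → ℝ) : ℝ :=
  sInf {T | ∃ s : ℕ → ℝ, Feasible n p s ∧ makespan n p s = T}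


lemma fin_strictMono_add {r : ℕ} (f : Fin r → ℕ) (hf : StrictMono f) :
    ∀ k (i : Fin r) (h : i.val + k < r), f i + k ≤ f ⟨i.val + k, h⟩ := by
  intro k
  induction k with
  | zero => intro i h; simp
  | succ k ih =>
    intro i h
    have h1 : i.val + k < r := by omega
    have := ih i h1
    have h2 : f ⟨i.val + k, h1⟩ < f ⟨i.val + (k+1), h⟩ := by
      apply hf; simp [Fin.lt_def]
    omega

lemma sublemma4 (n : ℕ) (p : ℕ → ℝ)
    (hsort : ∀ i j, 1 ≤ i → i ≤ j → j ≤ n → p j ≤ p i)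
    (D : Finset ℕ) (hD : D ⊆ Finset.Icc 1 n) :
    ∑ i ∈ Finset.Icc (n - D.card + 1) n, p i ≤ ∑ i ∈ D, p i := by
  set r := D.card with hr
  have hrn : r ≤ n := by
    have := Finset.card_le_card hD
    simpa [Nat.card_Icc] using this
  set e := D.orderEmbOfFin hr.symm with he
  have hmem : ∀ i : Fin r, e i ∈ D := fun i => D.orderEmbOfFin_mem hr.symm i
  have hbd : ∀ i : Fin r, 1 ≤ e i ∧ e i ≤ n := by
    intro i; have := hD (hmem i); simpa [Finset.mem_Icc] using this
  have hkey : ∀ i : Fin r, e i ≤ n - r + 1 + i.val := by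
    intro i
    have h1 : i.val + (r - 1 - i.val) < r := by omega
    have := fin_strictMono_add e (OrderEmbedding.strictMono e) (r - 1 - i.val) i h1
    have h2 : (⟨i.val + (r - 1 - i.val), h1⟩ : Fin r) = ⟨r - 1, by omega⟩ := by
      ext; simp; omega
    rw [h2] at this
    have h3 := (hbd ⟨r - 1, by omega⟩).2
    have h4 := i.2
    omega
  have hsum1 : ∑ i ∈ D, p i = ∑ i : Fin r, p (e i) := by
    symm
    apply Finset.sum_bij (fun (i : Fin r) _ => e i)
    · intro a _; exact hmem a
    · intro a _ b _ hab; exact e.injective hab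
    · intro b hb
      have : b ∈ Set.range e := by rw [Finset.range_orderEmbOfFin]; exact hb
      obtain ⟨i, hi⟩ := this
      exact ⟨i, Finset.mem_univ i, hi⟩
    · intro a _; rfl
  have hsum2 : ∑ i ∈ Finset.Icc (n - r + 1) n, p i = ∑ i : Fin r, p (n - r + 1 + i.val) := by
    symm
    apply Finset.sum_bij (fun (i : Fin r) _ => n - r + 1 + i.val)
    · intro a _; simp [Finset.mem_Icc]; omega
    · intro a _ b _ hab
      have : a.val = b.val := by omega
      exact Fin.ext this
    · intro b hb
      simp only [Finset.mem_Icc] at hb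
      refine ⟨⟨b - (n - r + 1), by omega⟩, Finset.mem_univ _, by simp; omega⟩
    · intro a _; rfl
  rw [hsum1, hsum2]
  apply Finset.sum_le_sum
  intro i _
  exact hsort (e i) (n - r + 1 + i.val) (hbd i).1 (hkey i) (by omega)

lemma icc_split (a b : ℕ) (h : a ≤ b) (f : ℕ → ℝ) :
    ∑ i ∈ Finset.Icc a b, f i = f a + ∑ i ∈ Finset.Icc (a + 1) b, f i := by
  have h1 : Finset.Icc a b = insert a (Finset.Icc (a + 1) b) := by
    ext x; simp only [Finset.mem_Icc, Finset.mem_insert]; omega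
  rw [h1, Finset.sum_insert (by simp only [Finset.mem_Icc]; omega)]

lemma gmono (n : ℕ) (hn : 1 ≤ n) (p : ℕ → ℝ)
    (hsort : ∀ i j, 1 ≤ i → i ≤ j → j ≤ n → p j ≤ p i)
    (d : ℕ) (hd : d ≤ (n + 1) / 2) :
    (if Odd n then p ((n + 1) / 2) else 0) + 2 * ∑ i ∈ Finset.Icc ((n + 1) / 2 + 1) n, p i
      ≤ ∑ i ∈ Finset.Icc (d + 1) n, p i + ∑ i ∈ Finset.Icc (n - d + 1) n, p i := by
  set k := (n + 1) / 2 with hk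
  suffices H : ∀ j d, d + j = k →
      (if Odd n then p k else 0) + 2 * ∑ i ∈ Finset.Icc (k + 1) n, p i
        ≤ ∑ i ∈ Finset.Icc (d + 1) n, p i + ∑ i ∈ Finset.Icc (n - d + 1) n, p i by
    exact H (k - d) d (by omega)
  intro j
  induction j with
  | zero =>
    intro d hd
    have hdk : d = k := by omega
    by_cases hodd : Odd n
    · have h1 : n % 2 = 1 := Nat.odd_iff.mp hodd
      have h2 : n - d + 1 = d := by omega
      rw [if_pos hodd, h2, hdk, icc_split k n (by omega)]
      linarith
    · have h1 : n % 2 = 0 := Nat.even_iff.mp (Nat.not_odd_iff_even.mp hodd)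
      have h2 : n - d + 1 = d + 1 := by omega
      rw [if_neg hodd, h2, hdk]
      linarith
  | succ j ih =>
    intro d hd
    have h1 := ih (d + 1) (by omega)
    have hdn : d + 1 ≤ n := by omega
    have h2 : n - (d + 1) + 1 = n - d := by omega
    have h2' : d + 1 + 1 = d + 2 := by omega
    rw [h2, h2'] at h1
    have h3 : ∑ i ∈ Finset.Icc (d + 1) n, p i = p (d + 1) + ∑ i ∈ Finset.Icc (d + 2) n, p i :=
      icc_split (d + 1) n hdn p
    have h4 : ∑ i ∈ Finset.Icc (n - d) n, p i = p (n - d) + ∑ i ∈ Finset.Icc (n - d + 1) n, p i :=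
      icc_split (n - d) n (by omega) p
    have h5 : p (n - d) ≤ p (d + 1) := hsort (d + 1) (n - d) (by omega) (by omega) (by omega)
    rw [h4] at h1
    rw [h3]
    linarith

lemma lemB (n : ℕ) (hn : 1 ≤ n) (p : ℕ → ℝ)
    (hsort : ∀ i j, 1 ≤ i → i ≤ j → j ≤ n → p j ≤ p i)
    (hpos : ∀ i, 1 ≤ i → i ≤ n → 0 < p i)
    (σ : ℕ → ℕ)
    (hσmem : ∀ t, t < n → 1 ≤ σ t ∧ σ t ≤ n)
    (hσinj : ∀ t, t < n → ∀ t', t' < n → σ t = σ t' → t = t') :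
    (if Odd n then p ((n + 1) / 2) else 0) + 2 * ∑ i ∈ Finset.Icc ((n + 1) / 2 + 1) n, p i
      ≤ ∑ t ∈ Finset.range (n - 1), min (p (σ t)) (p (σ (t + 1))) + p (σ (n - 1)) := by
  classical
  set o : ℕ → ℕ := fun t => if t + 1 < n then (if σ (t + 1) < σ t then t else t + 1) else t
    with ho
  have hoself : ∀ t, o t = t ∨ o t = t + 1 := by
    intro t; simp only [ho]; split_ifs <;> simp
  have holt : ∀ t, t < n → o t < n := by
    intro t ht; simp only [ho]; split_ifs <;> omega
  -- Step 1 : the chain sum dominates the owner sum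
  have hstep1 : ∑ t ∈ Finset.range n, p (σ (o t)) ≤
      ∑ t ∈ Finset.range (n - 1), min (p (σ t)) (p (σ (t + 1))) + p (σ (n - 1)) := by
    have hr := Finset.sum_range_succ (fun t => p (σ (o t))) (n - 1)
    rw [show n - 1 + 1 = n from by omega] at hr
    rw [hr]
    have holast : o (n - 1) = n - 1 := by
      simp only [ho]; rw [if_neg (by omega)]
    rw [holast]
    have : ∀ t ∈ Finset.range (n - 1), p (σ (o t)) ≤ min (p (σ t)) (p (σ (t + 1))) := by
      intro t ht
      simp only [Finset.mem_range] at ht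
      have ht1 : t + 1 < n := by omega
      have hm1 := hσmem t (by omega)
      have hm2 := hσmem (t + 1) ht1
      simp only [ho, if_pos ht1]
      by_cases hc : σ (t + 1) < σ t
      · rw [if_pos hc]
        exact le_min (le_refl _) (hsort (σ (t + 1)) (σ t) hm2.1 (by omega) hm1.2)
      · rw [if_neg hc]
        exact le_min (hsort (σ t) (σ (t + 1)) hm1.1 (by omega) hm2.2) (le_refl _)
    linarith [Finset.sum_le_sum this]
  -- Step 2 : fiber decomposition
  set c : ℕ → ℕ := fun j => ((Finset.range n).filter (fun t => o t = j)).card with hc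
  set img : Finset ℕ := (Finset.range n).image o with himg
  have hcomp : ∑ t ∈ Finset.range n, p (σ (o t)) = ∑ j ∈ img, c j • p (σ j) :=
    Finset.sum_comp (fun j => p (σ j)) o
  have himgsub : img ⊆ Finset.range n := by
    intro j hj
    simp only [himg, Finset.mem_image, Finset.mem_range] at hj ⊢
    obtain ⟨t, ht, rfl⟩ := hj
    exact holt t ht
  have htot : ∑ j ∈ img, c j = n := by
    have := Finset.card_eq_sum_card_fiberwise
      (fun t (ht : t ∈ Finset.range n) => Finset.mem_image_of_mem o ht)
    rw [Finset.card_range] at this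
    exact this.symm
  have hfibsub : ∀ j, (Finset.range n).filter (fun t => o t = j) ⊆ {j - 1, j} := by
    intro j t ht
    simp only [Finset.mem_filter, Finset.mem_range] at ht
    simp only [Finset.mem_insert, Finset.mem_singleton]
    rcases hoself t with h | h <;> omega
  have hc2 : ∀ j, c j ≤ 2 := by
    intro j
    calc c j ≤ ({j - 1, j} : Finset ℕ).card := Finset.card_le_card (hfibsub j)
    _ ≤ 2 := by
      apply le_trans (Finset.card_insert_le _ _); simp
  have hcimg : ∀ j ∈ img, 1 ≤ c j := by
    intro j hj
    simp only [himg, Finset.mem_image, Finset.mem_range] at hj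
    obtain ⟨t, ht, rfl⟩ := hj
    apply Finset.card_pos.mpr
    exact ⟨t, by simp [Finset.mem_filter, Finset.mem_range, ht]⟩
  set A : Finset ℕ := img.filter (fun j => 2 ≤ c j) with hA
  have hAsub : A ⊆ img := Finset.filter_subset _ _
  set d : ℕ := A.card with hd
  have hAself : ∀ j ∈ A, o j = j ∧ 1 ≤ j ∧ o (j - 1) = j := by
    intro j hj
    simp only [hA, Finset.mem_filter] at hj
    obtain ⟨hj1, hj2⟩ := hj
    have hj2' : 2 ≤ ((Finset.range n).filter (fun t => o t = j)).card := hj2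
    have hj1' : 1 ≤ j := by
      by_contra h
      have hj0 : j = 0 := by omega
      have hss : (Finset.range n).filter (fun t => o t = j) ⊆ {0} := by
        rw [hj0]; simpa using hfibsub 0
      have := Finset.card_le_card hss
      simp only [Finset.card_singleton] at this
      omega
    have heq : (Finset.range n).filter (fun t => o t = j) = ({j - 1, j} : Finset ℕ) := by
      apply Finset.eq_of_subset_of_card_le (hfibsub j)
      calc ({j - 1, j} : Finset ℕ).card ≤ 2 := by
            apply le_trans (Finset.card_insert_le _ _); simp
      _ ≤ _ := hj2'
    have hjin : j ∈ (Finset.range n).filter (fun t => o t = j) := by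
      rw [heq]; simp
    have hjin' : j - 1 ∈ (Finset.range n).filter (fun t => o t = j) := by
      rw [heq]; simp
    simp only [Finset.mem_filter] at hjin hjin'
    exact ⟨hjin.2, hj1', hjin'.2⟩
  have hind : ∀ j, j ∈ A → j + 1 ∈ A → False := by
    intro j hj hj1
    have h1 := (hAself j hj).1
    have h2 := (hAself (j + 1) hj1).2.2
    simp only [Nat.add_sub_cancel] at h2
    omega
  have hdk : d ≤ (n + 1) / 2 := by
    rw [hd]
    calc A.card ≤ (Finset.range ((n + 1) / 2)).card := by
          apply Finset.card_le_card_of_injOn (fun j => j / 2)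
          · intro j hj
            have := himgsub (hAsub hj)
            simp only [Finset.mem_range, Finset.mem_coe] at this ⊢
            omega
          · intro a ha b hb hab
            have hab' : a / 2 = b / 2 := hab
            by_contra hne
            have h3 : a + 1 = b ∨ b + 1 = a := by omega
            rcases h3 with h3 | h3
            · exact hind a ha (h3 ▸ hb)
            · exact hind b hb (h3 ▸ ha)
    _ = (n + 1) / 2 := Finset.card_range _
  have hdn : d ≤ n := by
    rw [hd]
    exact le_trans (Finset.card_le_card (hAsub.trans himgsub)) (by simp)
  have himgcard : n - d ≤ img.card := by
    have hs1 : ∑ j ∈ A, c j ≤ 2 * d := by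
      calc ∑ j ∈ A, c j ≤ ∑ j ∈ A, 2 := Finset.sum_le_sum (fun j _ => hc2 j)
      _ = 2 * d := by rw [Finset.sum_const, hd]; ring
    have hs2 : ∑ j ∈ img \ A, c j ≤ img.card - d := by
      calc ∑ j ∈ img \ A, c j ≤ ∑ j ∈ img \ A, 1 := by
            apply Finset.sum_le_sum
            intro j hj
            simp only [Finset.mem_sdiff, hA, Finset.mem_filter, not_and] at hj
            have := hj.2 hj.1
            omega
      _ = (img \ A).card := by simp
      _ = img.card - d := by rw [Finset.card_sdiff_of_subset hAsub, hd]
    have hs3 : ∑ j ∈ img \ A, c j + ∑ j ∈ A, c j = n := by rw [Finset.sum_sdiff hAsub, htot]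
    have hdimg : d ≤ img.card := Finset.card_le_card hAsub
    omega
  -- positivity
  have hmemσ : ∀ j ∈ img, 1 ≤ σ j ∧ σ j ≤ n := by
    intro j hj
    have := himgsub hj
    simp only [Finset.mem_range] at this
    exact hσmem j this
  have hposσ : ∀ j ∈ img, 0 < p (σ j) := by
    intro j hj
    exact hpos (σ j) (hmemσ j hj).1 (hmemσ j hj).2
  -- lower bound the owner sum
  have hsplit : ∑ j ∈ img, p (σ j) + ∑ j ∈ A, p (σ j) ≤ ∑ j ∈ img, c j • p (σ j) := by
    have e1 : ∑ j ∈ img \ A, c j • p (σ j) + ∑ j ∈ A, c j • p (σ j)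
        = ∑ j ∈ img, c j • p (σ j) := Finset.sum_sdiff hAsub
    have e2 : ∑ j ∈ img \ A, p (σ j) + ∑ j ∈ A, p (σ j) = ∑ j ∈ img, p (σ j) :=
      Finset.sum_sdiff hAsub
    have b1 : ∑ j ∈ img \ A, p (σ j) ≤ ∑ j ∈ img \ A, c j • p (σ j) := by
      apply Finset.sum_le_sum
      intro j hj
      have hj' : j ∈ img := (Finset.sdiff_subset) hj
      have h1 := hcimg j hj'
      have h2 := (hposσ j hj').le
      rw [nsmul_eq_mul]
      have h1' : (1 : ℝ) ≤ (c j : ℝ) := by exact_mod_cast h1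
      nlinarith
    have b2 : ∑ j ∈ A, 2 * p (σ j) ≤ ∑ j ∈ A, c j • p (σ j) := by
      apply Finset.sum_le_sum
      intro j hj
      have hj' : j ∈ A := hj
      simp only [hA, Finset.mem_filter] at hj'
      have h2 := (hposσ j hj'.1).le
      rw [nsmul_eq_mul]
      have : (2 : ℝ) ≤ (c j : ℝ) := by exact_mod_cast hj'.2
      nlinarith
    have b2' : ∑ j ∈ A, 2 * p (σ j) = 2 * ∑ j ∈ A, p (σ j) := by
      rw [Finset.mul_sum]
    linarith
  -- bound the two sums via sublemma4
  have hinjOn : ∀ (C : Finset ℕ), C ⊆ img → (C.image σ).card = C.card ∧ C.image σ ⊆ Finset.Icc 1 n := by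
    intro C hC
    constructor
    · apply Finset.card_image_of_injOn
      intro a ha b hb hab
      have ha' := himgsub (hC ha); have hb' := himgsub (hC hb)
      simp only [Finset.mem_range] at ha' hb'
      exact hσinj a ha' b hb' hab
    · intro x hx
      simp only [Finset.mem_image] at hx
      obtain ⟨j, hj, rfl⟩ := hx
      have := hmemσ j (hC hj)
      simp only [Finset.mem_Icc]
      exact this
  have hboundA : ∑ i ∈ Finset.Icc (n - d + 1) n, p i ≤ ∑ j ∈ A, p (σ j) := by
    obtain ⟨hcard, hsub⟩ := hinjOn A hAsub
    have := sublemma4 n p hsort (A.image σ) hsub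
    rw [hcard, ← hd] at this
    have heq : ∑ i ∈ A.image σ, p i = ∑ j ∈ A, p (σ j) := by
      apply Finset.sum_image
      intro a ha b hb hab
      have ha' := himgsub (hAsub ha); have hb' := himgsub (hAsub hb)
      simp only [Finset.mem_range] at ha' hb'
      exact hσinj a ha' b hb' hab
    rw [heq] at this
    exact this
  have hboundImg : ∑ i ∈ Finset.Icc (d + 1) n, p i ≤ ∑ j ∈ img, p (σ j) := by
    obtain ⟨sub, hsub1, hsub2⟩ := Finset.exists_subset_card_eq himgcard
    obtain ⟨hcard, hsub⟩ := hinjOn sub hsub1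
    have h6 := sublemma4 n p hsort (sub.image σ) hsub
    rw [hcard, hsub2, show n - (n - d) + 1 = d + 1 from by omega] at h6
    have heq : ∑ i ∈ sub.image σ, p i = ∑ j ∈ sub, p (σ j) := by
      apply Finset.sum_image
      intro a ha b hb hab
      have ha' := himgsub (hsub1 ha); have hb' := himgsub (hsub1 hb)
      simp only [Finset.mem_range] at ha' hb'
      exact hσinj a ha' b hb' hab
    rw [heq] at h6
    calc ∑ i ∈ Finset.Icc (d + 1) n, p i ≤ ∑ j ∈ sub, p (σ j) := h6
    _ ≤ ∑ j ∈ img, p (σ j) :=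
        Finset.sum_le_sum_of_subset_of_nonneg hsub1 (fun j hj _ => (hposσ j hj).le)
  have hG := gmono n hn p hsort d hdk
  linarith [hcomp]

lemma partA (n : ℕ) (hn : 1 ≤ n) (p s : ℕ → ℝ)
    (hpos : ∀ i, 1 ≤ i → i ≤ n → 0 < p i)
    (hf : Feasible n p s) :
    ∃ σ : ℕ → ℕ, (∀ t, t < n → 1 ≤ σ t ∧ σ t ≤ n) ∧
      (∀ t, t < n → ∀ t', t' < n → σ t = σ t' → t = t') ∧
      ∑ t ∈ Finset.range (n - 1), min (p (σ t)) (p (σ (t + 1))) + p (σ (n - 1))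
        ≤ makespan n p s := by
  classical
  obtain ⟨hs0, hsep⟩ := hf
  set J : Finset ℕ := Finset.Icc 1 n with hJ
  have hJcard : J.card = n := by simp [hJ, Nat.card_Icc]
  have hinj : Set.InjOn s ↑J := by
    intro i hi j hj hij
    simp only [hJ, Finset.coe_Icc, Set.mem_Icc] at hi hj
    by_contra hne
    have h1 := hsep i j hi.1 hi.2 hj.1 hj.2 hne
    rw [hij, sub_self, abs_zero] at h1
    have h2 : 0 < min (p i) (p j) := lt_min (hpos i hi.1 hi.2) (hpos j hj.1 hj.2)
    linarith
  set T : Finset ℝ := J.image s with hT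
  have hTcard : T.card = n := by rw [hT, Finset.card_image_of_injOn hinj, hJcard]
  set φ := T.orderIsoOfFin hTcard with hφ
  have hspec : ∀ t : Fin n, ∃ a, a ∈ J ∧ s a = ↑(φ t) := by
    intro t
    exact Finset.mem_image.mp (φ t).2
  set σ : ℕ → ℕ := fun t => if h : t < n then Classical.choose (hspec ⟨t, h⟩) else 1 with hσ
  have hσspec : ∀ t (h : t < n), σ t ∈ J ∧ s (σ t) = ↑(φ ⟨t, h⟩) := by
    intro t h
    simp only [hσ, dif_pos h]
    exact Classical.choose_spec (hspec ⟨t, h⟩)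
  have hσmem : ∀ t, t < n → 1 ≤ σ t ∧ σ t ≤ n := by
    intro t h
    have := (hσspec t h).1
    simpa [hJ, Finset.mem_Icc] using this
  have hmono : ∀ t t' (h : t < n) (h' : t' < n), t < t' → s (σ t) < s (σ t') := by
    intro t t' h h' htt
    rw [(hσspec t h).2, (hσspec t' h').2]
    have : (⟨t, h⟩ : Fin n) < ⟨t', h'⟩ := by simp [Fin.lt_def]; omega
    exact_mod_cast φ.strictMono this
  have hσinj : ∀ t, t < n → ∀ t', t' < n → σ t = σ t' → t = t' := by
    intro t ht t' ht' heq
    by_contra hne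
    rcases Nat.lt_or_ge t t' with h | h
    · have := hmono t t' ht ht' h; rw [heq] at this; exact lt_irrefl _ this
    · have h2 : t' < t := by omega
      have := hmono t' t ht' ht h2; rw [heq] at this; exact lt_irrefl _ this
  refine ⟨σ, hσmem, hσinj, ?_⟩
  have htel : ∀ r, r < n → ∑ t ∈ Finset.range r, min (p (σ t)) (p (σ (t + 1))) ≤ s (σ r) := by
    intro r
    induction r with
    | zero =>
      intro h
      simp only [Finset.range_zero, Finset.sum_empty]
      exact hs0 (σ 0) (hσmem 0 h).1 (hσmem 0 h).2
    | succ r ih =>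
      intro h
      have hr : r < n := by omega
      have h1 := ih hr
      rw [Finset.sum_range_succ]
      have hne : σ r ≠ σ (r + 1) := by
        intro hcon
        have := hσinj r hr (r + 1) h hcon
        omega
      have h2 := hsep (σ r) (σ (r + 1)) (hσmem r hr).1 (hσmem r hr).2
        (hσmem (r + 1) h).1 (hσmem (r + 1) h).2 hne
      have h3 : s (σ r) < s (σ (r + 1)) := hmono r (r + 1) hr h (by omega)
      rw [abs_sub_comm, abs_of_nonneg (by linarith)] at h2
      linarith
  have hlast := htel (n - 1) (by omega)
  have hmk : s (σ (n - 1)) + p (σ (n - 1)) ≤ makespan n p s := by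
    apply le_csSup
    · apply Set.Finite.bddAbove
      exact Set.Finite.image _ (Set.finite_Icc 1 n)
    · refine ⟨σ (n - 1), ?_, rfl⟩
      have := hσmem (n - 1) (by omega)
      simp only [Set.mem_Icc]
      exact this
  linarith

lemma existsFeasible (n : ℕ) (p : ℕ → ℝ)
    (hsort : ∀ i j, 1 ≤ i → i ≤ j → j ≤ n → p j ≤ p i)
    (hpos : ∀ i, 1 ≤ i → i ≤ n → 0 < p i) :
    ∃ s : ℕ → ℝ, Feasible n p s := by
  refine ⟨fun j => ∑ i ∈ Finset.Icc (j + 1) n, p i, ?_, ?_⟩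
  · intro j hj1 hjn
    apply Finset.sum_nonneg
    intro i hi
    simp only [Finset.mem_Icc] at hi
    exact (hpos i (by omega) hi.2).le
  · have key : ∀ i j, 1 ≤ i → i ≤ n → 1 ≤ j → j ≤ n → i < j →
        min (p i) (p j) ≤ (∑ l ∈ Finset.Icc (i + 1) n, p l) - ∑ l ∈ Finset.Icc (j + 1) n, p l := by
      intro i j hi1 hin hj1 hjn hij
      have hsplit : ∑ l ∈ Finset.Ioc i j, p l + ∑ l ∈ Finset.Ioc j n, p l
          = ∑ l ∈ Finset.Ioc i n, p l :=
        Finset.sum_Ioc_consecutive _ (by omega) (by omega)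
      rw [← Finset.Icc_add_one_left_eq_Ioc, ← Finset.Icc_add_one_left_eq_Ioc, ← Finset.Icc_add_one_left_eq_Ioc] at hsplit
      have hjmem : j ∈ Finset.Icc (i + 1) j := by simp [Finset.mem_Icc]; omega
      have hpj : p j ≤ ∑ l ∈ Finset.Icc (i + 1) j, p l := by
        apply Finset.single_le_sum (fun l hl => ?_) hjmem
        simp only [Finset.mem_Icc] at hl
        exact (hpos l (by omega) (by omega)).le
      have : min (p i) (p j) ≤ p j := min_le_right _ _
      linarith
    intro i j hi1 hin hj1 hjn hne
    rcases Nat.lt_or_ge i j with h | h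
    · have := key i j hi1 hin hj1 hjn h
      have hnn : (0:ℝ) ≤ (∑ l ∈ Finset.Icc (i + 1) n, p l) - ∑ l ∈ Finset.Icc (j + 1) n, p l := by
        linarith [this, lt_min (hpos i hi1 hin) (hpos j hj1 hjn)]
      rw [abs_of_nonneg hnn]
      exact this
    · have hj : j < i := by omega
      have := key j i hj1 hjn hi1 hin hj
      have hnn : (0:ℝ) ≤ (∑ l ∈ Finset.Icc (j + 1) n, p l) - ∑ l ∈ Finset.Icc (i + 1) n, p l := by
        linarith [this, lt_min (hpos j hj1 hjn) (hpos i hi1 hin)]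
      rw [abs_sub_comm, abs_of_nonneg hnn, min_comm]
      exact this

/-- every feasible schedule has makespan at least `m + 2S`, where `S` is the
total size of the smaller half of the jobs and `m` is the middle size if `n` is odd;
in particular `OPT p ≥ m + 2S`. -/
theorem stmt0 (n : ℕ) (hn : 1 ≤ n) (p : ℕ → ℝ)
    (hsort : ∀ i j, 1 ≤ i → i ≤ j → j ≤ n → p j ≤ p i)
    (hpos : ∀ i, 1 ≤ i → i ≤ n → 0 < p i)
    (S m : ℝ)
    (hS : S = ∑ i ∈ Finset.Icc ((n + 1) / 2 + 1) n, p i)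
    (hm : m = if Odd n then p ((n + 1) / 2) else 0) :
    (∀ s : ℕ → ℝ, Feasible n p s → m + 2 * S ≤ makespan n p s) ∧
      m + 2 * S ≤ OPT n p := by
  have part1 : ∀ s : ℕ → ℝ, Feasible n p s → m + 2 * S ≤ makespan n p s := by
    intro s hf
    obtain ⟨σ, hσmem, hσinj, hbound⟩ := partA n hn p s hpos hf
    have := lemB n hn p hsort hpos σ hσmem hσinj
    rw [hS, hm]
    linarith
  refine ⟨part1, ?_⟩
  apply le_csInf
  · obtain ⟨s₀, hs₀⟩ := existsFeasible n p hsort hpos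
    exact ⟨makespan n p s₀, s₀, hs₀, rfl⟩
  · rintro T ⟨s, hfs, rfl⟩
    exact part1 s hfs
end

section
/- Let p_1 ≥ p_2 ≥ ... ≥ p_n > 0 be a TS instance and let s be a feasible schedule with makespan T. Then there exist numbers a_1, ..., a_n ∈ {0, 1, 2} with a_1 + ... + a_n = n such that a_1 p_1 + ... + a_n p_n ≤ T. -/
lemma sum_if_real (S : Finset ℕ) (b : ℕ → ℕ) (p : ℕ → ℝ) (jm : ℕ) (hjm : jm ∈ S) :
    (∑ j ∈ S, ((b j + if j = jm then 1 else 0 : ℕ) : ℝ) * p j)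
      = (∑ j ∈ S, (b j : ℝ) * p j) + p jm := by
  push_cast
  simp only [add_mul, ite_mul, one_mul, zero_mul]
  rw [Finset.sum_add_distrib, Finset.sum_ite_eq' S jm p]
  simp [hjm]

lemma key (n : ℕ) (p s : ℕ → ℝ)
    (hsort : ∀ i j, 1 ≤ i → i ≤ j → j ≤ n → p j ≤ p i)
    (hs : Feasible n p s) :
    ∀ (S : Finset ℕ), S ⊆ Finset.Icc 1 n → ∀ j0 ∈ S, (∀ j ∈ S, s j ≤ s j0) →
    ∃ b : ℕ → ℕ, (∀ j, b j ≠ 0 → j ∈ S) ∧ (∀ j, b j ≤ 2) ∧ b j0 ≤ 1 ∧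
      (∑ j ∈ S, b j) = S.card - 1 ∧ (∑ j ∈ S, (b j : ℝ) * p j) ≤ s j0 := by
  intro S
  induction S using Finset.strongInduction with
  | _ S IH =>
    intro hSsub j0 hj0 hmax
    rcases Finset.mem_Icc.1 (hSsub hj0) with ⟨hj01, hj0n⟩
    by_cases hE : (S.erase j0).Nonempty
    · obtain ⟨j1, hj1, hj1max⟩ := Finset.exists_max_image (S.erase j0) s hE
      have hj1S : j1 ∈ S := Finset.mem_of_mem_erase hj1
      have hne : j1 ≠ j0 := Finset.ne_of_mem_erase hj1
      rcases Finset.mem_Icc.1 (hSsub hj1S) with ⟨hj11, hj1n⟩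
      obtain ⟨b', hsupp, hle2, hb1, hsum, hval⟩ :=
        IH (S.erase j0) (Finset.erase_ssubset hj0)
          ((Finset.erase_subset _ _).trans hSsub) j1 hj1 hj1max
      obtain ⟨jm, hjm0, hjm1, hjmor⟩ :
          ∃ jm, j0 ≤ jm ∧ j1 ≤ jm ∧ (jm = j0 ∨ jm = j1) := by
        rcases le_total j0 j1 with h | h
        · exact ⟨j1, h, le_rfl, Or.inr rfl⟩
        · exact ⟨j0, le_rfl, h, Or.inl rfl⟩
      have hjmS : jm ∈ S := by rcases hjmor with h | h <;> rw [h] <;> assumption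
      have hjmn : jm ≤ n := by rcases hjmor with h | h <;> omega
      have hpm0 : p jm ≤ p j0 := hsort j0 jm hj01 hjm0 hjmn
      have hpm1 : p jm ≤ p j1 := hsort j1 jm hj11 hjm1 hjmn
      have hb'j0 : b' j0 = 0 := by
        by_contra h
        exact (Finset.notMem_erase j0 S) (hsupp j0 h)
      refine ⟨fun j => b' j + if j = jm then 1 else 0, ?_, ?_, ?_, ?_, ?_⟩
      · intro j hj
        by_cases hjjm : j = jm
        · subst hjjm; exact hjmS
        · simp only [hjjm, if_false, add_zero] at hj
          exact Finset.mem_of_mem_erase (hsupp j hj)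
      · intro j
        by_cases hjjm : j = jm
        · subst hjjm
          rcases hjmor with h | h <;> subst h <;> simp <;> omega
        · simp only [hjjm, if_false, add_zero]; exact hle2 j
      · show b' j0 + (if j0 = jm then 1 else 0) ≤ 1
        by_cases h : jm = j0
        · subst h; simp; omega
        · rw [if_neg (fun hh => h hh.symm)]; omega
      · rw [Finset.sum_add_distrib]
        have h1 : (∑ j ∈ S, b' j) = S.card - 1 - 1 := by
          rw [← Finset.sum_erase S (by simpa using hb'j0)]
          rw [hsum, Finset.card_erase_of_mem hj0]
        have h2 : (∑ j ∈ S, if j = jm then 1 else 0) = 1 := by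
          rw [Finset.sum_ite_eq' S jm (fun _ => 1)]
          simp [hjmS]
        have hcard : 2 ≤ S.card := by
          have := Finset.card_erase_of_mem hj0
          have hE' := Finset.card_pos.2 hE
          omega
        omega
      · rw [sum_if_real S b' p jm hjmS]
        have hSsum : (∑ j ∈ S, (b' j : ℝ) * p j) ≤ s j1 := by
          rw [← Finset.sum_erase S (f := fun j => (b' j : ℝ) * p j) (a := j0)
            (by simp [hb'j0])]
          exact hval
        have hgap : p jm ≤ s j0 - s j1 := by
          have hfeas := hs.2 j0 j1 hj01 hj0n hj11 hj1n (Ne.symm hne)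
          have habs : |s j0 - s j1| = s j0 - s j1 := by
            rw [abs_of_nonneg]; linarith [hmax j1 hj1S]
          calc p jm ≤ min (p j0) (p j1) := le_min hpm0 hpm1
            _ ≤ |s j0 - s j1| := hfeas
            _ = s j0 - s j1 := habs
        linarith
    · have hSeq : S = {j0} := by
        rw [Finset.not_nonempty_iff_eq_empty] at hE
        apply Finset.eq_singleton_iff_unique_mem.2
        refine ⟨hj0, fun x hx => ?_⟩
        by_contra h
        exact (Finset.notMem_empty x) (hE ▸ Finset.mem_erase.2 ⟨h, hx⟩)
      refine ⟨fun _ => 0, by simp, by simp, by simp, by simp [hSeq], ?_⟩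
      simp only [Nat.cast_zero, zero_mul, Finset.sum_const_zero]
      exact hs.1 j0 hj01 hj0n

/-- for any feasible schedule with makespan `T` there are weights
`a j ∈ {0,1,2}` summing to `n` with `∑ a j * p j ≤ T`. -/
theorem stmt1 (n : ℕ) (hn : 1 ≤ n) (p : ℕ → ℝ)
    (hsort : ∀ i j, 1 ≤ i → i ≤ j → j ≤ n → p j ≤ p i)
    (hpos : ∀ i, 1 ≤ i → i ≤ n → 0 < p i)
    (s : ℕ → ℝ) (hs : Feasible n p s)
    (T : ℝ) (hT : makespan n p s = T) :
    ∃ a : ℕ → ℕ,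
      (∀ j ∈ Finset.Icc 1 n, a j ≤ 2) ∧
      (∑ j ∈ Finset.Icc 1 n, a j) = n ∧
      (∑ j ∈ Finset.Icc 1 n, (a j : ℝ) * p j) ≤ T := by
  have hne : (Finset.Icc 1 n).Nonempty := ⟨1, Finset.mem_Icc.2 ⟨le_refl _, hn⟩⟩
  obtain ⟨j0, hj0, hmax⟩ := Finset.exists_max_image (Finset.Icc 1 n) s hne
  obtain ⟨b, hsupp, hle2, hb1, hsum, hval⟩ :=
    key n p s hsort hs (Finset.Icc 1 n) (le_refl _) j0 hj0 hmax
  rcases Finset.mem_Icc.1 hj0 with ⟨hj01, hj0n⟩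
  refine ⟨fun j => b j + if j = j0 then 1 else 0, ?_, ?_, ?_⟩
  · intro j hj
    by_cases h : j = j0
    · subst h; simp; omega
    · simp only [h, if_false, add_zero]; exact hle2 j
  · have h2 : (∑ j ∈ Finset.Icc 1 n, if j = j0 then 1 else 0) = 1 := by
      rw [Finset.sum_ite_eq' _ j0 (fun _ => 1)]
      simp [hj0]
    rw [Finset.sum_add_distrib, h2, hsum, Nat.card_Icc]
    omega
  · rw [sum_if_real _ b p j0 hj0]
    have hmk : s j0 + p j0 ≤ makespan n p s := by
      apply le_csSup
      · exact Set.Finite.bddAbove ((Set.finite_Icc 1 n).image _)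
      · exact ⟨j0, Set.mem_Icc.2 ⟨hj01, hj0n⟩, rfl⟩
    rw [hT] at hmk
    linarith
end

section
/- Let p_1 ≥ p_2 ≥ ... ≥ p_n > 0 be real numbers, let S = p_{⌈n/2⌉+1} + ... + p_n, and let m = p_{(n+1)/2} if n is odd and m = 0 if n is even. Then the minimum of a_1 p_1 + ... + a_n p_n over all choices of a_1, ..., a_n ∈ {0, 1, 2} with a_1 + ... + a_n = n equals m + 2S; the minimum is attained by setting a_j = 2 for the smaller half of the indices, a_j = 0 for the larger half, and a_{(n+1)/2} = 1 if n is odd. -/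
open Finset

-- split a sum over Icc 1 t at k
lemma split_sum {M : Type*} [AddCommMonoid M] (f : ℕ → M) {k t : ℕ} (hk : k ≤ t) :
    ∑ j ∈ Icc 1 t, f j = (∑ j ∈ Icc 1 k, f j) + ∑ j ∈ Icc (k + 1) t, f j := by
  rw [show (1:ℕ) = 0 + 1 from rfl, Finset.Icc_add_one_left_eq_Ioc, Finset.Icc_add_one_left_eq_Ioc, zero_add, Finset.Icc_add_one_left_eq_Ioc,
    Finset.sum_Ioc_consecutive f (Nat.zero_le k) hk]

-- Abel summation identity
lemma abel_id (n : ℕ) (hn : 1 ≤ n) (c p : ℕ → ℝ) :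
    ∑ j ∈ Icc 1 n, c j * p j
      = (∑ t ∈ Icc 1 (n - 1), (∑ j ∈ Icc 1 t, c j) * (p t - p (t + 1)))
        + (∑ j ∈ Icc 1 n, c j) * p n := by
  induction n, hn using Nat.le_induction with
  | base => simp
  | succ n hn ih =>
      obtain ⟨m, rfl⟩ : ∃ m, n = m + 1 := ⟨n - 1, by omega⟩
      rw [Finset.sum_Icc_succ_top (by omega) (fun j => c j * p j), ih]
      have h1 : (m + 1 + 1) - 1 = m + 1 := by omega
      have h2 : (m + 1) - 1 = m := by omega
      rw [h1, h2, Finset.sum_Icc_succ_top (by omega)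
        (fun t => (∑ j ∈ Icc 1 t, c j) * (p t - p (t + 1))),
        Finset.sum_Icc_succ_top (a := 1) (b := m + 1) (by omega) c]
      ring

/-- for `p 1 ≥ … ≥ p n > 0`, the minimum of `∑ a j * p j` over weights
`a j ∈ {0,1,2}` with `∑ a j = n` equals `m + 2S` (with `S` the total size of the smaller
half and `m` the middle size if `n` is odd); moreover the minimum is attained by the
assignment giving `2` to the smaller half, `1` to the middle index if `n` is odd, and `0`
to the larger half. -/
theorem stmt2 (n : ℕ) (hn : 1 ≤ n) (p : ℕ → ℝ)
    (hsort : ∀ i j, 1 ≤ i → i ≤ j → j ≤ n → p j ≤ p i)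
    (hpos : ∀ i, 1 ≤ i → i ≤ n → 0 < p i)
    (S m : ℝ)
    (hS : S = ∑ i ∈ Finset.Icc ((n + 1) / 2 + 1) n, p i)
    (hm : m = if Odd n then p ((n + 1) / 2) else 0) :
    IsLeast {v : ℝ | ∃ a : ℕ → ℕ,
        (∀ j ∈ Finset.Icc 1 n, a j ≤ 2) ∧
        (∑ j ∈ Finset.Icc 1 n, a j) = n ∧
        v = ∑ j ∈ Finset.Icc 1 n, (a j : ℝ) * p j}
      (m + 2 * S) ∧
    (∑ j ∈ Finset.Icc 1 n,
        ((if (n + 1) / 2 + 1 ≤ j then (2 : ℝ)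
          else if Odd n ∧ j = (n + 1) / 2 then 1 else 0) * p j)) = m + 2 * S := by
  set k := (n + 1) / 2 with hkdef
  have hk1 : 1 ≤ k := by omega
  have hkn : k ≤ n := by omega
  set b : ℕ → ℝ := fun j => if k + 1 ≤ j then (2 : ℝ) else if Odd n ∧ j = k then 1 else 0
    with hb
  -- partial sums of b on initial segments past k
  have hbsum : ∀ t, k ≤ t → ∑ j ∈ Icc 1 t, b j = 2 * t - n := by
    intro t hkt
    rw [split_sum b hkt]
    have h1 : ∑ j ∈ Icc 1 k, b j = if Odd n then 1 else 0 := by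
      have hc : ∀ j ∈ Icc 1 k, b j = if Odd n ∧ j = k then 1 else 0 := by
        intro j hj
        simp only [mem_Icc] at hj
        simp only [hb]
        rw [if_neg (by omega)]
      rw [Finset.sum_congr rfl hc]
      by_cases hodd : Odd n
      · simp only [hodd, true_and]
        rw [Finset.sum_ite_eq' (Icc 1 k) k (fun _ => (1:ℝ))]
        simp [hk1]
      · simp [hodd]
    have h2 : ∑ j ∈ Icc (k + 1) t, b j = 2 * ((t : ℝ) - k) := by
      have hc : ∀ j ∈ Icc (k + 1) t, b j = 2 := by
        intro j hj; simp only [mem_Icc] at hj; simp only [hb]; rw [if_pos hj.1]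
      rw [Finset.sum_congr rfl hc, Finset.sum_const, Nat.card_Icc,
        show t + 1 - (k + 1) = t - k by omega, nsmul_eq_mul, Nat.cast_sub hkt]
      ring
    rw [h1, h2]
    rcases Nat.even_or_odd n with he | ho
    · rw [if_neg (Nat.not_odd_iff_even.mpr he)]
      have h3 : (n : ℝ) = 2 * k := by
        exact_mod_cast (show n = 2 * k by obtain ⟨r, hr⟩ := he; omega)
      linarith
    · rw [if_pos ho]
      have h3 : (n : ℝ) + 1 = 2 * k := by
        exact_mod_cast (show n + 1 = 2 * k by obtain ⟨r, hr⟩ := ho; omega)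
      linarith
  -- value of the optimal assignment
  have hval : ∑ j ∈ Icc 1 n, b j * p j = m + 2 * S := by
    rw [split_sum (fun j => b j * p j) hkn]
    have h1 : ∑ j ∈ Icc 1 k, b j * p j = m := by
      have hc : ∀ j ∈ Icc 1 k, b j * p j = if Odd n ∧ j = k then p j else 0 := by
        intro j hj
        simp only [mem_Icc] at hj
        simp only [hb]
        rw [if_neg (by omega)]
        split_ifs <;> simp
      rw [Finset.sum_congr rfl hc, hm]
      by_cases hodd : Odd n
      · simp only [hodd, true_and, if_true]
        rw [Finset.sum_ite_eq' (Icc 1 k) k p]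
        simp [hk1]
      · simp [hodd]
    have h2 : ∑ j ∈ Icc (k + 1) n, b j * p j = 2 * S := by
      have hc : ∀ j ∈ Icc (k + 1) n, b j * p j = 2 * p j := by
        intro j hj; simp only [mem_Icc] at hj; simp only [hb]; rw [if_pos hj.1]
      rw [Finset.sum_congr rfl hc, ← Finset.mul_sum, hS]
    rw [h1, h2]
  refine ⟨⟨?_, ?_⟩, hval⟩
  · -- membership: the nat witness
    refine ⟨fun j => if k + 1 ≤ j then 2 else if Odd n ∧ j = k then 1 else 0, ?_, ?_, ?_⟩
    · intro j _; dsimp only; split_ifs <;> omega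
    · rw [split_sum _ hkn]
      have h1 : ∑ j ∈ Icc 1 k, (if k + 1 ≤ j then 2 else if Odd n ∧ j = k then 1 else 0)
          = if Odd n then 1 else 0 := by
        have hc : ∀ j ∈ Icc 1 k,
            (if k + 1 ≤ j then 2 else if Odd n ∧ j = k then 1 else 0)
              = if Odd n ∧ j = k then 1 else 0 := by
          intro j hj; simp only [mem_Icc] at hj; rw [if_neg (by omega)]
        rw [Finset.sum_congr rfl hc]
        by_cases hodd : Odd n
        · simp only [hodd, true_and]
          rw [Finset.sum_ite_eq' (Icc 1 k) k (fun _ => 1)]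
          simp [hk1]
        · simp [hodd]
      have h2 : ∑ j ∈ Icc (k + 1) n, (if k + 1 ≤ j then 2 else if Odd n ∧ j = k then 1 else 0)
          = 2 * (n - k) := by
        have hc : ∀ j ∈ Icc (k + 1) n,
            (if k + 1 ≤ j then 2 else if Odd n ∧ j = k then 1 else 0) = 2 := by
          intro j hj; simp only [mem_Icc] at hj; rw [if_pos hj.1]
        rw [Finset.sum_congr rfl hc, Finset.sum_const, Nat.card_Icc,
          show n + 1 - (k + 1) = n - k by omega, smul_eq_mul]
        exact Nat.mul_comm _ _
      rw [h1, h2]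
      rcases Nat.even_or_odd n with he | ho
      · rw [if_neg (Nat.not_odd_iff_even.mpr he)]
        obtain ⟨r, hr⟩ := he; omega
      · rw [if_pos ho]; obtain ⟨r, hr⟩ := ho; omega
    · rw [← hval]
      refine Finset.sum_congr rfl fun j _ => ?_
      congr 1
      simp only [hb]
      split_ifs <;> norm_num
  · -- lower bound
    rintro v ⟨a, ha2, hasum, rfl⟩
    have key : 0 ≤ ∑ j ∈ Icc 1 n, ((a j : ℝ) - b j) * p j := by
      rw [abel_id n hn (fun j => (a j : ℝ) - b j) p]
      have hCn : ∑ j ∈ Icc 1 n, ((a j : ℝ) - b j) = 0 := by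
        rw [Finset.sum_sub_distrib, hbsum n hkn]
        rw [← Nat.cast_sum, hasum]
        ring
      rw [hCn, zero_mul, add_zero]
      refine Finset.sum_nonneg fun t ht => ?_
      simp only [mem_Icc] at ht
      have hCt : 0 ≤ ∑ j ∈ Icc 1 t, ((a j : ℝ) - b j) := by
        rw [Finset.sum_sub_distrib, sub_nonneg]
        by_cases hkt : k ≤ t
        · rw [hbsum t hkt]
          have hsplit : (∑ j ∈ Icc 1 t, a j) + ∑ j ∈ Icc (t + 1) n, a j = n := by
            rw [← split_sum a (show t ≤ n by omega)]; exact hasum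
          have hub : ∑ j ∈ Icc (t + 1) n, a j ≤ 2 * (n - t) := by
            calc ∑ j ∈ Icc (t + 1) n, a j ≤ (Icc (t + 1) n).card * 2 := by
                  refine Finset.sum_le_card_nsmul _ _ 2 fun j hj => ?_
                  simp only [mem_Icc] at hj
                  exact ha2 j (mem_Icc.mpr ⟨by omega, hj.2⟩)
              _ = 2 * (n - t) := by rw [Nat.card_Icc]; omega
          have hlb : n ≤ (∑ j ∈ Icc 1 t, a j) + 2 * (n - t) := by omega
          have : (n : ℝ) ≤ (∑ j ∈ Icc 1 t, (a j : ℝ)) + 2 * ((n : ℝ) - t) := by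
            have := hlb
            have hcast : ((∑ j ∈ Icc 1 t, a j : ℕ) : ℝ) = ∑ j ∈ Icc 1 t, (a j : ℝ) := by
              push_cast; rfl
            calc (n : ℝ) ≤ (((∑ j ∈ Icc 1 t, a j) + 2 * (n - t) : ℕ) : ℝ) := by
                  exact_mod_cast hlb
              _ = (∑ j ∈ Icc 1 t, (a j : ℝ)) + 2 * ((n : ℝ) - t) := by
                  push_cast [Nat.cast_sub (show t ≤ n by omega)]; ring
          linarith
        · have hzero : ∀ j ∈ Icc 1 t, b j = 0 := by
            intro j hj
            simp only [mem_Icc] at hj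
            simp only [hb]
            rw [if_neg (by omega), if_neg (by rintro ⟨-, rfl⟩; omega)]
          rw [Finset.sum_eq_zero hzero]
          exact Finset.sum_nonneg fun j _ => Nat.cast_nonneg _
      have hpd : 0 ≤ p t - p (t + 1) := by
        have := hsort t (t + 1) ht.1 (by omega) (by omega)
        linarith
      exact mul_nonneg hCt hpd
    have hsplit2 : ∑ j ∈ Icc 1 n, ((a j : ℝ) - b j) * p j
        = (∑ j ∈ Icc 1 n, (a j : ℝ) * p j) - ∑ j ∈ Icc 1 n, b j * p j := by
      rw [← Finset.sum_sub_distrib]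
      exact Finset.sum_congr rfl fun j _ => by ring
    rw [hsplit2, hval] at key
    linarith
end

section
/- Let p_1 ≥ p_2 ≥ ... ≥ p_n > 0 be a TS instance. For every j with 1 ≤ j ≤ n, every element of the Greedy gap multiset G_j is at least p_j. -/
/-- The multiset of gaps maintained by Greedy: `G 1 = {p 1}`, and `G (j+1)` is obtained
from `G j` by removing a maximum element `x` and inserting `p (j+1)` and
`max (p (j+1)) (x - p (j+1))`. (For positive instances `fold max 0` is the maximum.) -/
noncomputable def greedyGaps (p : ℕ → ℝ) : ℕ → Multiset ℝ
  | 0 => 0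
  | 1 => {p 1}
  | (j + 2) =>
      let G := greedyGaps p (j + 1)
      let x := G.fold max 0
      p (j + 2) ::ₘ max (p (j + 2)) (x - p (j + 2)) ::ₘ G.erase x

/-- after Greedy has placed job `j`, every gap has size at least `p j`. -/
theorem stmt3 (n : ℕ) (hn : 1 ≤ n) (p : ℕ → ℝ)
    (hsort : ∀ i j, 1 ≤ i → i ≤ j → j ≤ n → p j ≤ p i)
    (hpos : ∀ i, 1 ≤ i → i ≤ n → 0 < p i) :
    ∀ j, 1 ≤ j → j ≤ n → ∀ x ∈ greedyGaps p j, p j ≤ x := by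
  intro j
  induction j with
  | zero => intro h; omega
  | succ k ih =>
    intro _ hkn x hx
    match k with
    | 0 =>
      simp [greedyGaps] at hx
      simp [hx]
    | m + 1 =>
      rw [greedyGaps] at hx
      simp only [Multiset.mem_cons] at hx
      rcases hx with h | h | h
      · simp [h]
      · rw [h]; exact le_max_left _ _
      · have hx' := Multiset.mem_of_mem_erase h
        have := ih (by omega) (by omega) x hx'
        have hle := hsort (m + 1) (m + 2) (by omega) (by omega) hkn
        linarith
end

section
/- Let p_1 ≥ p_2 ≥ ... ≥ p_n > 0 be a TS instance such that all sizes are within a factor of two, i.e., p_1 ≤ 2 p_n. Then p_1 + p_2 + ... + p_n ≤ (3/2) · OPT(p). -/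
lemma sum_shift (p : ℕ → ℝ) (m : ℕ) :
    ∑ k ∈ Finset.range m, p (k + 1) = ∑ i ∈ Finset.Icc 1 m, p i := by
  induction m with
  | zero => simp
  | succ m ih =>
    rw [Finset.sum_range_succ, ih, Finset.sum_Icc_succ_top (by omega)]

lemma key_lb (n : ℕ) (hn : 1 ≤ n) (p : ℕ → ℝ)
    (hsort : ∀ i j, 1 ≤ i → i ≤ j → j ≤ n → p j ≤ p i)
    (hratio : p 1 ≤ 2 * p n)
    (s : ℕ → ℝ) (hf : Feasible n p s) :
    2 / 3 * (∑ i ∈ Finset.Icc 1 n, p i) ≤ makespan n p s := by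
  obtain ⟨hnn, hsep⟩ := hf
  set f : Fin n → ℝ := fun k => s (k.1 + 1) with hfdef
  set σ := Tuple.sort f with hσdef
  have hmono : Monotone (f ∘ σ) := Tuple.monotone_sort f
  have hlt : ∀ k : ℕ, min k (n - 1) < n := fun k => by omega
  set idx : ℕ → ℕ := fun k => (σ ⟨min k (n - 1), hlt k⟩).1 + 1 with hidxdef
  have hrange : ∀ k, 1 ≤ idx k ∧ idx k ≤ n := fun k =>
    ⟨Nat.succ_le_succ (Nat.zero_le _), (σ ⟨min k (n-1), hlt k⟩).2⟩
  have hinj : ∀ k l, k ≤ n - 1 → l ≤ n - 1 → k ≠ l → idx k ≠ idx l := by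
    intro k l hk hl hkl h
    simp only [hidxdef, add_left_inj] at h
    have h2 : (⟨min k (n-1), hlt k⟩ : Fin n) = ⟨min l (n-1), hlt l⟩ :=
      σ.injective (Fin.val_injective h)
    have h3 : min k (n-1) = min l (n-1) := congrArg Fin.val h2
    omega
  have hQl : ∀ k, p n ≤ p (idx k) := fun k => hsort (idx k) n (hrange k).1 (hrange k).2 le_rfl
  have hQu : ∀ k, p (idx k) ≤ p 1 := fun k => hsort 1 (idx k) le_rfl (hrange k).1 (hrange k).2
  have hGmono : ∀ k l, k ≤ l → s (idx k) ≤ s (idx l) := by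
    intro k l hkl
    exact hmono (show (⟨min k (n-1), hlt k⟩ : Fin n) ≤ ⟨min l (n-1), hlt l⟩ by
      simp [Fin.le_def]; omega)
  have hstep : ∀ k, k + 1 ≤ n - 1 →
      min (p (idx k)) (p (idx (k+1))) ≤ s (idx (k+1)) - s (idx k) := by
    intro k hk
    have h := hsep (idx k) (idx (k+1)) (hrange k).1 (hrange k).2 (hrange (k+1)).1
      (hrange (k+1)).2 (hinj k (k+1) (by omega) hk (by omega))
    rwa [abs_sub_comm, abs_of_nonneg (by linarith [hGmono k (k+1) (by omega)])] at h
  have hind : ∀ m, m ≤ n - 1 →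
      s (idx 0) + ∑ k ∈ Finset.range m, min (p (idx k)) (p (idx (k+1))) ≤ s (idx m) := by
    intro m
    induction m with
    | zero => simp
    | succ m ih =>
      intro hm
      rw [Finset.sum_range_succ]
      have := ih (by omega)
      have := hstep m hm
      linarith
  -- total sum identity
  have hsum : ∑ k ∈ Finset.range n, p (idx k) = ∑ i ∈ Finset.Icc 1 n, p i := by
    have h1 : ∀ k : Fin n, p (idx k.1) = p ((σ k).1 + 1) := by
      intro k
      have : (⟨min k.1 (n-1), hlt k.1⟩ : Fin n) = k := by
        apply Fin.ext; simp; omega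
      simp [hidxdef, this]
    calc ∑ k ∈ Finset.range n, p (idx k) = ∑ k : Fin n, p (idx k.1) :=
          (Fin.sum_univ_eq_sum_range (fun k => p (idx k)) n).symm
      _ = ∑ k : Fin n, p ((σ k).1 + 1) := Finset.sum_congr rfl (fun k _ => h1 k)
      _ = ∑ k : Fin n, p (k.1 + 1) := Equiv.sum_comp σ (fun k : Fin n => p (k.1 + 1))
      _ = ∑ k ∈ Finset.range n, p (k + 1) := Fin.sum_univ_eq_sum_range (fun k => p (k + 1)) n
      _ = ∑ i ∈ Finset.Icc 1 n, p i := sum_shift p n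
  have hmk : s (idx (n-1)) + p (idx (n-1)) ≤ makespan n p s := by
    apply le_csSup
    · exact ((Set.finite_Icc 1 n).image _).bddAbove
    · exact ⟨idx (n-1), ⟨(hrange (n-1)).1, (hrange (n-1)).2⟩, rfl⟩
  have hminlb : ∀ k ∈ Finset.range (n-1),
      (p (idx k) + p (idx (k+1))) / 3 ≤ min (p (idx k)) (p (idx (k+1))) := by
    intro k _
    have h1 := hQl k; have h2 := hQu k; have h3 := hQl (k+1); have h4 := hQu (k+1)
    rcases le_total (p (idx k)) (p (idx (k+1))) with h | h
    · rw [min_eq_left h]; linarith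
    · rw [min_eq_right h]; linarith
  have hs1 : ∑ k ∈ Finset.range (n-1), (p (idx k) + p (idx (k+1))) / 3 ≤
      ∑ k ∈ Finset.range (n-1), min (p (idx k)) (p (idx (k+1))) :=
    Finset.sum_le_sum hminlb
  have e1 : ∑ k ∈ Finset.range n, p (idx k)
      = ∑ k ∈ Finset.range (n-1), p (idx k) + p (idx (n-1)) := by
    conv_lhs => rw [show n = (n-1)+1 by omega, Finset.sum_range_succ]
  have e2 : ∑ k ∈ Finset.range n, p (idx k)
      = ∑ k ∈ Finset.range (n-1), p (idx (k+1)) + p (idx 0) := by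
    conv_lhs => rw [show n = (n-1)+1 by omega, Finset.sum_range_succ']
  have e3 : ∑ k ∈ Finset.range (n-1), (p (idx k) + p (idx (k+1))) / 3
      = (∑ k ∈ Finset.range (n-1), p (idx k) + ∑ k ∈ Finset.range (n-1), p (idx (k+1))) / 3 := by
    rw [← Finset.sum_div, Finset.sum_add_distrib]
  have hind' := hind (n-1) le_rfl
  have hG0 : 0 ≤ s (idx 0) := hnn (idx 0) (hrange 0).1 (hrange 0).2
  have hQ0 := hQu 0
  have hQlast := hQl (n-1)
  linarith
/-- if all sizes are within a factor of two (`p 1 ≤ 2 * p n`), then the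
total size is at most `(3/2) · OPT p`. -/
theorem stmt4 (n : ℕ) (hn : 1 ≤ n) (p : ℕ → ℝ)
    (hsort : ∀ i j, 1 ≤ i → i ≤ j → j ≤ n → p j ≤ p i)
    (hpos : ∀ i, 1 ≤ i → i ≤ n → 0 < p i)
    (hratio : p 1 ≤ 2 * p n) :
    (∑ i ∈ Finset.Icc 1 n, p i) ≤ 3 / 2 * OPT n p := by
  have hp1 : 0 < p 1 := hpos 1 le_rfl hn
  -- a feasible schedule exists
  set s0 : ℕ → ℝ := fun j => ((j : ℝ) - 1) * p 1 with hs0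
  have hfeas : Feasible n p s0 := by
    constructor
    · intro j hj _
      have : (1:ℝ) ≤ (j:ℝ) := by exact_mod_cast hj
      simp only [hs0]
      nlinarith
    · intro i j hi hin hj hjn hij
      have h1 : min (p i) (p j) ≤ p 1 := le_trans (min_le_left _ _) (hsort 1 i le_rfl hi hin)
      have h2 : |s0 i - s0 j| = |(i:ℝ) - j| * p 1 := by
        simp only [hs0]
        rw [← sub_mul, abs_mul, abs_of_pos hp1]
        ring_nf
      have hij' : (i:ℤ) ≠ (j:ℤ) := by exact_mod_cast hij
      have h4 : (1:ℤ) ≤ |(i:ℤ) - (j:ℤ)| := by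
        rcases lt_or_gt_of_ne hij' with h | h
        · rw [abs_sub_comm, abs_of_pos (by omega)]; omega
        · rw [abs_of_pos (by omega)]; omega
      have h3 : (1:ℝ) ≤ |(i:ℝ) - j| := by
        calc (1:ℝ) = ((1:ℤ):ℝ) := by norm_num
          _ ≤ ((|(i:ℤ) - (j:ℤ)| : ℤ) : ℝ) := by exact_mod_cast h4
          _ = |(i:ℝ) - j| := by rw [Int.cast_abs]; push_cast; ring_nf
      rw [h2]
      nlinarith
  have hne : {T | ∃ s : ℕ → ℝ, Feasible n p s ∧ makespan n p s = T}.Nonempty :=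
    ⟨makespan n p s0, s0, hfeas, rfl⟩
  have hlb : 2 / 3 * (∑ i ∈ Finset.Icc 1 n, p i) ≤ OPT n p := by
    apply le_csInf hne
    rintro T ⟨s, hs, rfl⟩
    exact key_lb n hn p hsort hratio s hs
  linarith
end

section
/- Let p_1 ≥ p_2 ≥ ... ≥ p_n > 0 be a TS instance. For every j with 1 ≤ j ≤ n, there exists a feasible schedule for the instance p_1, ..., p_j whose multiset of gaps (the differences between consecutive start times in sorted order, together with the difference between the last start time and the makespan) equals the Greedy gap multiset G_j; in particular, there exists a feasible schedule for p_1, ..., p_n whose makespan equals the sum of the elements of G_n. -/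
/-- The multiset of gaps of a schedule: the differences between consecutive start times
in sorted order, together with the difference between the last start time and the
makespan. -/
noncomputable def gapMultiset (n : ℕ) (p s : ℕ → ℝ) : Multiset ℝ :=
  let l := ((Finset.Icc 1 n).val.map s).sort (· ≤ ·)
  ↑(List.zipWith (fun u v => v - u) l (l.drop 1 ++ [makespan n p s]))
namespace Stmt6Aux

def gapsL : List ℝ → ℝ → List ℝ
  | [], _ => []
  | [a], M => [M - a]
  | a :: b :: t, M => (b - a) :: gapsL (b :: t) M

lemma gapsL_eq_zipWith : ∀ (l : List ℝ) (M : ℝ),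
    gapsL l M = List.zipWith (fun u v => v - u) l (l.drop 1 ++ [M])
  | [], _ => rfl
  | [_], _ => rfl
  | a :: b :: t, M => by
      rw [gapsL, gapsL_eq_zipWith (b :: t) M]
      simp

lemma gapsL_append_singleton : ∀ (l : List ℝ) (u a : ℝ),
    gapsL (l ++ [u]) a = gapsL l u ++ [a - u]
  | [], u, a => rfl
  | [_], _, _ => rfl
  | b :: c :: t, u, a => by
      have h := gapsL_append_singleton (c :: t) u a
      simp only [List.cons_append, List.append_eq, gapsL] at *
      rw [h]

lemma gapsL_middle : ∀ (l₁ : List ℝ) (u v : ℝ) (l₂ : List ℝ) (M : ℝ),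
    gapsL (l₁ ++ u :: v :: l₂) M = gapsL l₁ u ++ (v - u) :: gapsL (v :: l₂) M
  | [], u, v, l₂, M => rfl
  | [b], u, v, l₂, M => rfl
  | b :: c :: t, u, v, l₂, M => by
      have h := gapsL_middle (c :: t) u v l₂ M
      simp only [List.cons_append, List.append_eq, gapsL] at *
      rw [h]

lemma gapsL_map_add : ∀ (l : List ℝ) (M c : ℝ),
    gapsL (l.map (· + c)) (M + c) = gapsL l M
  | [], _, _ => rfl
  | [a], M, c => by simp [gapsL]
  | a :: b :: t, M, c => by
      have h := gapsL_map_add (b :: t) M c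
      simp only [List.map_cons] at *
      rw [gapsL, gapsL, h]
      norm_num

lemma gapsL_sum : ∀ (l : List ℝ), l ≠ [] → ∀ M, (gapsL l M).sum = M - l.headI
  | [], h, _ => absurd rfl h
  | [a], _, M => by simp [gapsL]
  | a :: b :: t, _, M => by
      rw [gapsL, List.sum_cons, gapsL_sum (b :: t) (by simp) M]
      simp

lemma gapsL_mem : ∀ (l : List ℝ) (M x : ℝ), x ∈ gapsL l M →
    (∃ l₁ u, l = l₁ ++ [u] ∧ x = M - u) ∨
    (∃ l₁ u v l₂, l = l₁ ++ u :: v :: l₂ ∧ x = v - u)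
  | [], _, _, h => by simp [gapsL] at h
  | [a], M, x, h => by
      left; exact ⟨[], a, rfl, by simpa [gapsL] using h⟩
  | a :: b :: t, M, x, h => by
      rw [gapsL, List.mem_cons] at h
      rcases h with h | h
      · right; exact ⟨[], a, b, t, rfl, h⟩
      · rcases gapsL_mem (b :: t) M x h with ⟨l₁, u, hl, hx⟩ | ⟨l₁, u, v, l₂, hl, hx⟩
        · left; exact ⟨a :: l₁, u, by rw [hl]; rfl, hx⟩
        · right; exact ⟨a :: l₁, u, v, l₂, by rw [hl]; rfl, hx⟩

lemma fold_max_mem (m : Multiset ℝ) (hm : m ≠ 0) (h0 : ∀ a ∈ m, 0 ≤ a) :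
    m.fold max 0 ∈ m ∧ ∀ a ∈ m, a ≤ m.fold max 0 := by
  induction m using Multiset.induction with
  | empty => exact absurd rfl hm
  | cons a s ih =>
    rw [Multiset.fold_cons_left]
    rcases eq_or_ne s 0 with rfl | hs
    · simp only [Multiset.fold_zero]
      have ha : 0 ≤ a := h0 a (by simp)
      constructor
      · simp [max_eq_left ha]
      · intro b hb
        simp only [Multiset.mem_cons, Multiset.notMem_zero, or_false] at hb
        simp [hb, max_eq_left ha]
    · obtain ⟨h1, h2⟩ := ih hs (fun b hb => h0 b (Multiset.mem_cons_of_mem hb))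
      constructor
      · rcases le_total a (s.fold max 0) with h | h
        · rw [max_eq_right h]; exact Multiset.mem_cons_of_mem h1
        · rw [max_eq_left h]; exact Multiset.mem_cons_self a s
      · intro b hb
        rcases Multiset.mem_cons.mp hb with rfl | hb
        · exact le_max_left _ _
        · exact le_trans (h2 b hb) (le_max_right _ _)


lemma makespan_eq_of (n : ℕ) (p s : ℕ → ℝ) (k : ℕ) (h1 : 1 ≤ k) (h2 : k ≤ n)
    (hd : ∀ i, 1 ≤ i → i ≤ n → s i + p i ≤ s k + p k) :
    makespan n p s = s k + p k := by
  apply IsGreatest.csSup_eq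
  constructor
  · exact ⟨k, ⟨h1, h2⟩, rfl⟩
  · rintro y ⟨i, ⟨hi1, hi2⟩, rfl⟩
    exact hd i hi1 hi2

lemma sort_eq_of (m : Multiset ℝ) (l : List ℝ) (h : m = ↑l) (hs : l.Pairwise (· ≤ ·)) :
    m.sort (· ≤ ·) = l := by
  have h2 : (↑(m.sort (· ≤ ·)) : Multiset ℝ) = ↑l := by rw [Multiset.sort_eq]; exact h
  exact List.Perm.eq_of_pairwise' (Multiset.pairwise_sort _ _) hs (Multiset.coe_eq_coe.mp h2)

lemma greedyGaps_two (p : ℕ → ℝ) (j : ℕ) :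
    greedyGaps p (j + 2) =
      p (j + 2) ::ₘ max (p (j + 2)) ((greedyGaps p (j+1)).fold max 0 - p (j + 2)) ::ₘ
        (greedyGaps p (j+1)).erase ((greedyGaps p (j+1)).fold max 0) := by
  rw [greedyGaps]

lemma greedy_facts (n : ℕ) (p : ℕ → ℝ)
    (hsort : ∀ i j, 1 ≤ i → i ≤ j → j ≤ n → p j ≤ p i) :
    ∀ j, 1 ≤ j → j ≤ n → (greedyGaps p j ≠ 0) ∧ ∀ a ∈ greedyGaps p j, p j ≤ a := by
  intro j
  induction j with
  | zero => omega
  | succ m ih =>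
    intro _ hmn
    match m, ih, hmn with
    | 0, _, _ =>
      refine ⟨by simp [greedyGaps], ?_⟩
      intro a ha
      simp only [greedyGaps, Multiset.mem_singleton] at ha
      exact ha.ge
    | (m' + 1), ih, hmn =>
      rw [greedyGaps_two]
      refine ⟨by simp, ?_⟩
      intro a ha
      obtain ⟨hne, hlb⟩ := ih (by omega) (by omega)
      have hmono : p (m' + 2) ≤ p (m' + 1) := hsort (m' + 1) (m' + 2) (by omega) (by omega) hmn
      have hmn2 : m' + 1 + 1 = m' + 2 := rfl
      rw [hmn2]
      rcases Multiset.mem_cons.mp ha with rfl | ha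
      · exact le_refl _
      · rcases Multiset.mem_cons.mp ha with rfl | ha
        · exact le_max_left _ _
        · exact le_trans hmono (hlb a (Multiset.mem_of_mem_erase ha))

lemma key (n : ℕ) (p : ℕ → ℝ)
    (hsort : ∀ i j, 1 ≤ i → i ≤ j → j ≤ n → p j ≤ p i)
    (hpos : ∀ i, 1 ≤ i → i ≤ n → 0 < p i) :
    ∀ j, 1 ≤ j → j ≤ n → ∃ (s : ℕ → ℝ) (l : List ℝ) (k : ℕ),
      Feasible j p s ∧
      ((Finset.Icc 1 j).val.map s = (↑l : Multiset ℝ)) ∧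
      l.Pairwise (· < ·) ∧ (0:ℝ) ∈ l ∧
      1 ≤ k ∧ k ≤ j ∧ (∀ a ∈ l, a ≤ s k) ∧
      (∀ i, 1 ≤ i → i ≤ j → s i + p i ≤ s k + p k) ∧
      ((↑(gapsL l (s k + p k)) : Multiset ℝ) = greedyGaps p j) := by
  intro j
  induction j with
  | zero => omega
  | succ m ih =>
    intro _ hmn1
    rcases Nat.eq_zero_or_pos m with rfl | hm1
    · -- base case j = 1
      refine ⟨fun _ => 0, [0], 1, ⟨fun _ _ _ => le_refl 0, fun i j h1 h2 h3 h4 hne => absurd (by omega) hne⟩,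
        ?_, by simp, by simp, le_refl 1, le_refl 1, by simp, fun i h1 h2 => by
          have : i = 1 := by omega
          rw [this], ?_⟩
      · simp
      · show (↑(gapsL [0] (0 + p 1)) : Multiset ℝ) = greedyGaps p 1
        rw [show gapsL [0] (0 + p 1) = [0 + p 1 - 0] from rfl]
        simp [greedyGaps]
    · obtain ⟨m', rfl⟩ : ∃ m', m = m' + 1 := ⟨m - 1, by omega⟩
      obtain ⟨s, l, k, hfeas, hmul, hsortl, h0l, hk1, hkm, hub, hdom, hgap⟩ :=
        ih (by omega) (by omega)
      set p' := p (m' + 2) with hp'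
      have hp'pos : 0 < p' := hpos _ (by omega) hmn1
      have hple : ∀ i, 1 ≤ i → i ≤ m' + 2 → p' ≤ p i := fun i h1 h2 =>
        hsort i (m' + 2) h1 h2 hmn1
      obtain ⟨hGne, hGlb⟩ := greedy_facts n p hsort (m' + 1) (by omega) (by omega)
      have hppos : 0 < p (m' + 1) := hpos _ (by omega) (by omega)
      have hG0 : ∀ a ∈ greedyGaps p (m' + 1), 0 ≤ a := fun a ha =>
        le_trans hppos.le (hGlb a ha)
      set G := greedyGaps p (m' + 1) with hGdef
      set x := G.fold max 0 with hxdef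
      obtain ⟨hxmem, hxub⟩ := fold_max_mem G hGne hG0
      have hxp1 : p (m' + 1) ≤ x := hGlb x hxmem
      have hp21 : p' ≤ p (m' + 1) := hple (m' + 1) (by omega) (by omega)
      have hxp : p' ≤ x := le_trans hp21 hxp1
      set M := s k + p k with hMdef
      have hxgl : x ∈ gapsL l M := by
        rw [← Multiset.mem_coe, hgap]; exact hxmem
      have mem_l : ∀ a ∈ l, ∃ i, 1 ≤ i ∧ i ≤ m' + 1 ∧ s i = a := by
        intro a ha
        have : a ∈ (Finset.Icc 1 (m' + 1)).val.map s := by rw [hmul]; exact ha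
        obtain ⟨i, hi, hia⟩ := Multiset.mem_map.mp this
        rw [Finset.mem_val, Finset.mem_Icc] at hi
        exact ⟨i, hi.1, hi.2, hia⟩
      have l_nonneg : ∀ a ∈ l, 0 ≤ a := by
        intro a ha
        obtain ⟨i, h1, h2, rfl⟩ := mem_l a ha
        exact hfeas.1 i h1 h2
      have sk_mem : s k ∈ l := by
        rw [← Multiset.mem_coe, ← hmul]
        exact Multiset.mem_map_of_mem s (by rw [Finset.mem_val, Finset.mem_Icc]; exact ⟨hk1, hkm⟩)
      have hicc : Finset.Icc 1 (m' + 2) = insert (m' + 2) (Finset.Icc 1 (m' + 1)) := by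
        ext i; simp only [Finset.mem_Icc, Finset.mem_insert]; omega
      have hiccval : (Finset.Icc 1 (m' + 2)).val = (m' + 2) ::ₘ (Finset.Icc 1 (m' + 1)).val := by
        rw [hicc, Finset.insert_val_of_notMem (by simp)]
      have hGj2 : greedyGaps p (m' + 2) = p' ::ₘ max p' (x - p') ::ₘ G.erase x := greedyGaps_two p m'
      rcases gapsL_mem l M x hxgl with ⟨l₁, u, hldec, hxeq⟩ | ⟨l₁, u, v, l₂, hldec, hxeq⟩
      · -- Case A : split the final gap
        have hul : ∀ a ∈ l, a ≤ u := by
          intro a ha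
          rw [hldec] at ha hsortl
          rcases List.mem_append.mp ha with h | h
          · exact ((List.pairwise_append.mp hsortl).2.2 a h u (by simp)).le
          · simp only [List.mem_singleton] at h; exact h.le
        have humem : u ∈ l := by rw [hldec]; simp
        have hus : u = s k := le_antisymm (hub u humem) (hul (s k) sk_mem)
        have hxpk : x = p k := by rw [hxeq, hMdef, hus]; ring
        set w := u + max p' (x - p') with hwdef
        have huw : u < w := by
          have : 0 < max p' (x - p') := lt_of_lt_of_le hp'pos (le_max_left _ _)
          linarith
        have hxle : x ≤ max p' (x - p') + p' := by
          rcases le_total (x - p') p' with h | h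
          · rw [max_eq_left (by linarith)]; linarith
          · rw [max_eq_right h]; linarith
        set s' := Function.update s (m' + 2) w with hs'def
        have hs'old : ∀ i, i ≤ m' + 1 → s' i = s i := by
          intro i hi
          exact Function.update_of_ne (by omega) _ _
        have hs'new : s' (m' + 2) = w := Function.update_self _ _ _
        have hdom' : ∀ i, 1 ≤ i → i ≤ m' + 2 → s' i + p i ≤ s' (m' + 2) + p (m' + 2) := by
          intro i h1 h2
          rcases Nat.lt_or_ge i (m' + 2) with h | h
          · rw [hs'old i (by omega), hs'new]
            have := hdom i h1 (by omega)
            have hMw : M ≤ w + p' := by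
              rw [hwdef, hxeq] at *
              have : M - u ≤ max p' (M - u - p') + p' := by rw [← hxeq]; exact hxle
              linarith
            rw [← hp']; linarith
          · have : i = m' + 2 := by omega
            rw [this]
        refine ⟨s', l ++ [w], m' + 2, ?_, ?_, ?_, ?_, by omega, le_refl _, ?_, hdom', ?_⟩
        · -- Feasible
          constructor
          · intro i h1 h2
            rcases Nat.lt_or_ge i (m' + 2) with h | h
            · rw [hs'old i (by omega)]; exact hfeas.1 i h1 (by omega)
            · have : i = m' + 2 := by omega
              rw [this, hs'new]
              have : 0 ≤ u := l_nonneg u humem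
              linarith
          · intro i j h1 h2 h3 h4 hne
            rcases Nat.lt_or_ge i (m' + 2) with hi | hi <;> rcases Nat.lt_or_ge j (m' + 2) with hj | hj
            · rw [hs'old i (by omega), hs'old j (by omega)]
              exact hfeas.2 i j h1 (by omega) h3 (by omega) hne
            · have hj2 : j = m' + 2 := by omega
              subst hj2
              rw [hs'old i (by omega), hs'new]
              have hsiu : s i ≤ u := by
                apply hul
                rw [← Multiset.mem_coe, ← hmul]
                exact Multiset.mem_map_of_mem s (by rw [Finset.mem_val, Finset.mem_Icc]; exact ⟨h1, by omega⟩)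
              have : min (p i) (p (m' + 2)) = p' := min_eq_right (hple i h1 (by omega))
              rw [this, abs_sub_comm, abs_of_nonneg (by linarith)]
              have : p' ≤ max p' (x - p') := le_max_left _ _
              linarith
            · have hi2 : i = m' + 2 := by omega
              subst hi2
              rw [hs'old j (by omega), hs'new]
              have hsju : s j ≤ u := by
                apply hul
                rw [← Multiset.mem_coe, ← hmul]
                exact Multiset.mem_map_of_mem s (by rw [Finset.mem_val, Finset.mem_Icc]; exact ⟨h3, by omega⟩)
              have : min (p (m' + 2)) (p j) = p' := min_eq_left (hple j h3 (by omega))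
              rw [this, abs_of_nonneg (by linarith)]
              have : p' ≤ max p' (x - p') := le_max_left _ _
              linarith
            · omega
        · -- multiset equality
          rw [hiccval, Multiset.map_cons, hs'new]
          have : Multiset.map s' (Finset.Icc 1 (m' + 1)).val = Multiset.map s (Finset.Icc 1 (m' + 1)).val := by
            apply Multiset.map_congr rfl
            intro i hi
            rw [Finset.mem_val, Finset.mem_Icc] at hi
            exact hs'old i hi.2
          rw [this, hmul]
          rw [show ((↑(l ++ [w]) : Multiset ℝ)) = ↑l + ↑[w] from by rw [← Multiset.coe_add],
            add_comm, Multiset.coe_singleton, Multiset.singleton_add]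
        · -- sorted
          exact List.pairwise_append.mpr ⟨hsortl, by simp, fun a ha b hb => by
            simp only [List.mem_singleton] at hb
            exact hb ▸ lt_of_le_of_lt (hul a ha) huw⟩
        · exact List.mem_append_left _ h0l
        · -- upper bounds
          intro a ha
          rw [hs'new]
          rcases List.mem_append.mp ha with h | h
          · exact le_trans (hul a h) huw.le
          · simp only [List.mem_singleton] at h; exact h.le
        · -- gaps
          rw [hs'new, gapsL_append_singleton]
          have h1 : w + p' - w = p' := by ring
          rw [h1]
          rw [hldec, gapsL_append_singleton]
          have h2 : w - u = max p' (x - p') := by rw [hwdef]; ring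
          rw [h2, hGj2]
          have hGdec : G = x ::ₘ ↑(gapsL l₁ u) := by
            rw [← hgap, hldec, gapsL_append_singleton, ← hxeq]
            rw [show ((↑(gapsL l₁ u ++ [x]) : Multiset ℝ)) = ↑(gapsL l₁ u) + ↑[x] from by rw [← Multiset.coe_add]]
            simp [add_comm]
          rw [hGdec, Multiset.erase_cons_head]
          rw [show ((↑((gapsL l₁ u ++ [max p' (x - p')]) ++ [p']) : Multiset ℝ)) =
            ↑(gapsL l₁ u) + ↑[max p' (x - p')] + ↑[p'] from by rw [← Multiset.coe_add, ← Multiset.coe_add]]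
          simp only [Multiset.coe_singleton, ← Multiset.singleton_add]
          abel
      · -- Case B: interior gap
        rw [hldec] at hsortl
        have hpw := List.pairwise_append.mp hsortl
        have hl₁u : ∀ a ∈ l₁, a < u := fun a ha => hpw.2.2 a ha u (by simp)
        have hsort_uvl₂ := hpw.2.1
        have huv : u < v := (List.pairwise_cons.mp hsort_uvl₂).1 v (by simp)
        have hsort_vl₂ : List.Pairwise (· < ·) (v :: l₂) := (List.pairwise_cons.mp hsort_uvl₂).2
        have hvl₂ : ∀ b ∈ l₂, v < b := (List.pairwise_cons.mp hsort_vl₂).1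
        have hvle : ∀ t ∈ v :: l₂, v ≤ t := by
          intro t ht
          rcases List.mem_cons.mp ht with rfl | ht
          · exact le_rfl
          · exact (hvl₂ t ht).le
        have hmem_vl₂ : ∀ t ∈ v :: l₂, t ∈ l := by
          intro t ht
          rw [hldec]
          exact List.mem_append_right _ (List.mem_cons_of_mem u ht)
        have smem : ∀ i, 1 ≤ i → i ≤ m' + 1 → s i ∈ l := by
          intro i h1 h2
          rw [← Multiset.mem_coe, ← hmul]
          exact Multiset.mem_map_of_mem s (by rw [Finset.mem_val, Finset.mem_Icc]; exact ⟨h1, h2⟩)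
        have hdich : ∀ a ∈ l, a ≤ u ∨ v ≤ a := by
          intro a ha
          rw [hldec] at ha
          rcases List.mem_append.mp ha with h | h
          · exact Or.inl (hl₁u a h).le
          · rcases List.mem_cons.mp h with rfl | h
            · exact Or.inl le_rfl
            · exact Or.inr (hvle a h)
        have humem : u ∈ l := by rw [hldec]; simp
        have hvmem : v ∈ l := by rw [hldec]; simp
        have hu0 : 0 ≤ u := l_nonneg u humem
        have hvsk : v ≤ s k := hub v hvmem
        have husk : u < s k := lt_of_lt_of_le huv hvsk
        have hvux : v = u + x := by rw [hxeq]; ring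
        set ng := max p' (x - p') with hngdef
        set δ := ng - (x - p') with hδdef
        have hngp' : p' ≤ ng := le_max_left _ _
        have hδ0 : 0 ≤ δ := by
          have := le_max_right p' (x - p')
          rw [hδdef]; linarith
        have hxδ : 2 * p' ≤ x + δ := by rw [hδdef]; linarith
        set f : ℝ → ℝ := fun t => if u < t then t + δ else t with hfdef
        have hf_le : ∀ t, t ≤ f t := by
          intro t; rw [hfdef]; dsimp only; split <;> linarith
        have hf_le' : ∀ t, f t ≤ t + δ := by
          intro t; rw [hfdef]; dsimp only; split <;> linarith
        have hf_exp : ∀ a b : ℝ, a ≤ b → b - a ≤ f b - f a := by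
          intro a b hab; rw [hfdef]; dsimp only; split_ifs <;> linarith
        have hf_abs : ∀ a b : ℝ, |a - b| ≤ |f a - f b| := by
          intro a b
          rcases le_total a b with h | h
          · have h2 := hf_exp a b h
            rw [abs_sub_comm a b, abs_sub_comm (f a) (f b),
              abs_of_nonneg (by linarith), abs_of_nonneg (by linarith)]
            linarith
          · have h2 := hf_exp b a h
            rw [abs_of_nonneg (by linarith), abs_of_nonneg (by linarith)]
            linarith
        have hf_low : ∀ t, t ≤ u → f t = t := by
          intro t ht; rw [hfdef]; exact if_neg (not_lt.mpr ht)
        have hf_high : ∀ t, v ≤ t → f t = t + δ := by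
          intro t ht; rw [hfdef]; exact if_pos (by linarith)
        set s' : ℕ → ℝ := fun i => if i = m' + 2 then u + p' else f (s i) with hs'def
        have hs'old : ∀ i, i ≤ m' + 1 → s' i = f (s i) := by
          intro i hi; rw [hs'def]; exact if_neg (by omega)
        have hs'new : s' (m' + 2) = u + p' := by simp [hs'def]
        have hgap2 : v + δ - (u + p') = ng := by rw [hvux, hδdef]; ring
        have hupvδ : u + p' < v + δ := by
          have : 0 < ng := lt_of_lt_of_le hp'pos hngp'
          linarith
        set R := (v :: l₂).map (· + δ) with hRdef
        set l' := l₁ ++ u :: (u + p') :: R with hl'def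
        have hs'k : s' k = s k + δ := by rw [hs'old k hkm]; exact hf_high _ hvsk
        have hpk : p' ≤ p k := hple k hk1 (by omega)
        have hdom' : ∀ i, 1 ≤ i → i ≤ m' + 2 → s' i + p i ≤ s' k + p k := by
          intro i h1 h2
          rw [hs'k]
          rcases Nat.lt_or_ge i (m' + 2) with h | h
          · rw [hs'old i (by omega)]
            have := hdom i h1 (by omega)
            have := hf_le' (s i)
            linarith
          · have : i = m' + 2 := by omega
            rw [this, hs'new, ← hp']
            linarith
        refine ⟨s', l', k, ?_, ?_, ?_, ?_, hk1, by omega, ?_, hdom', ?_⟩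
        · -- Feasible
          constructor
          · intro i h1 h2
            rcases Nat.lt_or_ge i (m' + 2) with h | h
            · rw [hs'old i (by omega)]
              exact le_trans (hfeas.1 i h1 (by omega)) (hf_le _)
            · have : i = m' + 2 := by omega
              rw [this, hs'new]; linarith
          · intro i j h1 h2 h3 h4 hne
            rcases Nat.lt_or_ge i (m' + 2) with hi | hi <;> rcases Nat.lt_or_ge j (m' + 2) with hj | hj
            · rw [hs'old i (by omega), hs'old j (by omega)]
              exact le_trans (hfeas.2 i j h1 (by omega) h3 (by omega) hne) (hf_abs _ _)
            · have hj2 : j = m' + 2 := by omega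
              subst hj2
              rw [hs'old i (by omega), hs'new]
              rw [min_eq_right (hple i h1 (by omega))]
              rcases hdich (s i) (smem i h1 (by omega)) with h | h
              · rw [hf_low _ h, abs_sub_comm, abs_of_nonneg (by linarith)]
                linarith
              · rw [hf_high _ h, abs_of_nonneg (by linarith)]
                linarith
            · have hi2 : i = m' + 2 := by omega
              subst hi2
              rw [hs'old j (by omega), hs'new]
              rw [min_eq_left (hple j h3 (by omega))]
              rcases hdich (s j) (smem j h3 (by omega)) with h | h
              · rw [hf_low _ h, abs_of_nonneg (by linarith)]
                linarith
              · rw [hf_high _ h, abs_sub_comm, abs_of_nonneg (by linarith)]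
                linarith
            · omega
        · -- multiset equality
          rw [hiccval, Multiset.map_cons, hs'new]
          have hmap1 : Multiset.map s' (Finset.Icc 1 (m' + 1)).val
              = Multiset.map (fun i => f (s i)) (Finset.Icc 1 (m' + 1)).val := by
            apply Multiset.map_congr rfl
            intro i hi
            rw [Finset.mem_val, Finset.mem_Icc] at hi
            exact hs'old i hi.2
          have hmap2 : Multiset.map (fun i => f (s i)) (Finset.Icc 1 (m' + 1)).val
              = Multiset.map f (Multiset.map s (Finset.Icc 1 (m' + 1)).val) := by
            rw [Multiset.map_map]; rfl
          rw [hmap1, hmap2, hmul]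
          have hlf : l.map f = l₁ ++ u :: R := by
            rw [hldec, List.map_append, List.map_cons]
            congr 1
            · have h0 := List.map_congr_left (l := l₁) (f := f) (g := id)
                (fun a ha => hf_low a (hl₁u a ha).le)
              simpa using h0
            · rw [hf_low u le_rfl]
              congr 1
              rw [hRdef]
              exact List.map_congr_left (fun t ht => hf_high t (hvle t ht))
          rw [show (Multiset.map f ↑l : Multiset ℝ) = ↑(l.map f) from (Multiset.map_coe f l).symm ▸ rfl]
          rw [hlf, hl'def]
          rw [Multiset.cons_coe]
          apply Multiset.coe_eq_coe.mpr
          rw [List.append_cons l₁ u (R), List.append_cons l₁ u ((u + p') :: R)]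
          exact List.perm_middle.symm
        · -- sorted
          apply List.pairwise_append.mpr
          have hRmem : ∀ b ∈ R, v + δ ≤ b := by
            intro b hb
            rw [hRdef] at hb
            obtain ⟨t, ht, rfl⟩ := List.mem_map.mp hb
            have := hvle t ht
            linarith
          refine ⟨hpw.1, ?_, ?_⟩
          · apply List.pairwise_cons.mpr
            constructor
            · intro b hb
              rcases List.mem_cons.mp hb with rfl | hb
              · linarith
              · have := hRmem b hb; linarith
            · apply List.pairwise_cons.mpr
              refine ⟨fun b hb => lt_of_lt_of_le hupvδ (hRmem b hb), ?_⟩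
              rw [hRdef]
              apply List.pairwise_map.mpr
              exact hsort_vl₂.imp (fun h => by linarith)
          · intro a ha b hb
            have hau : a < u := hl₁u a ha
            rcases List.mem_cons.mp hb with rfl | hb
            · exact hau
            · rcases List.mem_cons.mp hb with rfl | hb
              · linarith
              · have := hRmem b hb; linarith
        · -- 0 ∈ l'
          rw [hldec] at h0l
          rcases List.mem_append.mp h0l with h | h
          · exact List.mem_append_left _ h
          · rcases List.mem_cons.mp h with h | h
            · rw [hl'def]; rw [← h]; simp
            · exfalso
              have := hvle 0 h
              linarith
        · -- upper bounds
          intro a ha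
          rw [hs'k]
          rw [hl'def] at ha
          rcases List.mem_append.mp ha with h | h
          · have := hl₁u a h; linarith
          · rcases List.mem_cons.mp h with rfl | h
            · linarith
            · rcases List.mem_cons.mp h with rfl | h
              · linarith
              · rw [hRdef] at h
                obtain ⟨t, ht, rfl⟩ := List.mem_map.mp h
                have := hub t (hmem_vl₂ t ht)
                linarith
        · -- gaps
          have hM' : s' k + p k = M + δ := by rw [hs'k, hMdef]; ring
          rw [hM', hl'def, hRdef, List.map_cons, gapsL_middle]
          rw [show gapsL ((u + p') :: (v + δ) :: l₂.map (· + δ)) (M + δ)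
              = (v + δ - (u + p')) :: gapsL ((v + δ) :: l₂.map (· + δ)) (M + δ) from rfl]
          rw [show ((v + δ) :: l₂.map (· + δ)) = (v :: l₂).map (· + δ) from rfl]
          rw [gapsL_map_add, hgap2]
          have huu : u + p' - u = p' := by ring
          rw [huu]
          have hGdec : G = x ::ₘ (↑(gapsL l₁ u) + ↑(gapsL (v :: l₂) M)) := by
            rw [← hgap, hldec, gapsL_middle, ← hxeq]
            rw [← Multiset.coe_add, ← Multiset.cons_coe]
            simp only [← Multiset.singleton_add]
            abel
          rw [hGj2, hGdec, Multiset.erase_cons_head]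
          rw [← Multiset.coe_add, ← Multiset.cons_coe, ← Multiset.cons_coe]
          simp only [← Multiset.singleton_add]
          abel

end Stmt6Aux

/-- for every `j`, there is a feasible schedule for the instance
`p 1, …, p j` whose multiset of gaps equals the Greedy gap multiset `G j`; in
particular there is a feasible schedule for `p 1, …, p n` whose makespan equals the sum
of the elements of `G n`. -/
theorem stmt6 (n : ℕ) (hn : 1 ≤ n) (p : ℕ → ℝ)
    (hsort : ∀ i j, 1 ≤ i → i ≤ j → j ≤ n → p j ≤ p i)
    (hpos : ∀ i, 1 ≤ i → i ≤ n → 0 < p i) :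
    (∀ j, 1 ≤ j → j ≤ n →
      ∃ s : ℕ → ℝ, Feasible j p s ∧ gapMultiset j p s = greedyGaps p j) ∧
    ∃ s : ℕ → ℝ, Feasible n p s ∧ makespan n p s = (greedyGaps p n).sum := by
  have hkey := Stmt6Aux.key n p hsort hpos
  have main : ∀ j, 1 ≤ j → j ≤ n →
      ∃ s : ℕ → ℝ, Feasible j p s ∧ gapMultiset j p s = greedyGaps p j ∧
        makespan j p s = (greedyGaps p j).sum := by
    intro j hj1 hjn
    obtain ⟨s, l, k, hfeas, hmul, hsortl, h0l, hk1, hkj, hub, hdom, hgap⟩ := hkey j hj1 hjn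
    have hmk : makespan j p s = s k + p k :=
      Stmt6Aux.makespan_eq_of j p s k hk1 hkj hdom
    have hsort' : ((Finset.Icc 1 j).val.map s).sort (· ≤ ·) = l :=
      Stmt6Aux.sort_eq_of _ l hmul (hsortl.imp le_of_lt)
    have hlne : l ≠ [] := by rintro rfl; simp at h0l
    have hhead : l.headI = 0 := by
      obtain ⟨a, t, rfl⟩ := List.exists_cons_of_ne_nil hlne
      have ha0 : 0 ≤ a := by
        have : a ∈ (Finset.Icc 1 j).val.map s := by rw [hmul]; simp
        obtain ⟨i, hi, hia⟩ := Multiset.mem_map.mp this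
        rw [Finset.mem_val, Finset.mem_Icc] at hi
        rw [← hia]
        exact hfeas.1 i hi.1 hi.2
      have ha0' : a ≤ 0 := by
        rcases List.mem_cons.mp h0l with h | h
        · exact h.ge
        · exact ((List.pairwise_cons.mp hsortl).1 0 h).le
      simp [le_antisymm ha0' ha0]
    refine ⟨s, hfeas, ?_, ?_⟩
    · show (↑(List.zipWith (fun u v => v - u) (((Finset.Icc 1 j).val.map s).sort (· ≤ ·))
        ((((Finset.Icc 1 j).val.map s).sort (· ≤ ·)).drop 1 ++ [makespan j p s])) : Multiset ℝ)
        = greedyGaps p j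
      rw [hsort', ← Stmt6Aux.gapsL_eq_zipWith, hmk]
      exact hgap
    · rw [hmk, ← hgap, Multiset.sum_coe, Stmt6Aux.gapsL_sum l hlne, hhead]
      ring
  constructor
  · intro j hj1 hjn
    obtain ⟨s, h1, h2, _⟩ := main j hj1 hjn
    exact ⟨s, h1, h2⟩
  · obtain ⟨s, h1, _, h3⟩ := main n hn le_rfl
    exact ⟨s, h1, h3⟩
end

section
/- Let p_1 ≥ p_2 ≥ ... ≥ p_n > 0 be a TS instance whose binary tree ratio satisfies R(p) ≤ 2, i.e., p_{⌈i/2⌉} ≤ 2 p_i for all 2 ≤ i ≤ n. Then for every j with 1 ≤ j ≤ n, the Greedy gap multiset G_j consists of exactly two copies of p_i for each index i with ⌈j/2⌉ + 1 ≤ i ≤ j, together with one additional copy of p_{(j+1)/2} if j is odd. -/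
private lemma fold_max_le' (a : ℝ) (ha : 0 ≤ a) (s : Multiset ℝ) (hs : ∀ y ∈ s, y ≤ a) :
    s.fold max 0 ≤ a := by
  induction s using Multiset.induction with
  | empty => simpa using ha
  | cons b t ih =>
    rw [Multiset.fold_cons_left]
    exact max_le (hs b (by simp)) (ih fun y hy => hs y (by simp [hy]))

private lemma fold_max_eq' (a : ℝ) (s : Multiset ℝ) (ha : 0 ≤ a) (hs : ∀ y ∈ s, y ≤ a) :
    (a ::ₘ s).fold max 0 = a := by
  rw [Multiset.fold_cons_left]
  exact max_eq_left (fold_max_le' a ha s hs)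

/-- if the binary tree ratio is at most 2 (`p ⌈i/2⌉ ≤ 2 p i` for all
`2 ≤ i ≤ n`), then for every `j` the Greedy gap multiset `G j` consists of two copies of
`p i` for each `⌈j/2⌉ + 1 ≤ i ≤ j`, plus one copy of `p ((j+1)/2)` if `j` is odd.
(Note `⌈i/2⌉ = (i+1)/2` with natural division.) -/
theorem stmt7 (n : ℕ) (hn : 1 ≤ n) (p : ℕ → ℝ)
    (hsort : ∀ i j, 1 ≤ i → i ≤ j → j ≤ n → p j ≤ p i)
    (hpos : ∀ i, 1 ≤ i → i ≤ n → 0 < p i)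
    (hratio : ∀ i, 2 ≤ i → i ≤ n → p ((i + 1) / 2) ≤ 2 * p i) :
    ∀ j, 1 ≤ j → j ≤ n →
      greedyGaps p j =
        (if Odd j then ({p ((j + 1) / 2)} : Multiset ℝ) else 0) +
          ∑ i ∈ Finset.Icc ((j + 1) / 2 + 1) j, ({p i, p i} : Multiset ℝ) := by
  intro j
  induction j with
  | zero => intro h; omega
  | succ j ih =>
    intro _ hjn
    rcases Nat.eq_zero_or_pos j with rfl | hj1
    · simp [greedyGaps, show ¬ (2 ≤ 1) by omega]
    · obtain ⟨k, rfl⟩ : ∃ k, j = k + 1 := ⟨j - 1, by omega⟩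
      have IH := ih (by omega) (by omega)
      have hunf : greedyGaps p (k + 1 + 1) =
          p (k + 2) ::ₘ max (p (k + 2)) ((greedyGaps p (k+1)).fold max 0 - p (k + 2)) ::ₘ
            (greedyGaps p (k+1)).erase ((greedyGaps p (k+1)).fold max 0) := by
        rw [greedyGaps]
      rcases Nat.even_or_odd (k + 1) with he | ho
      · -- k+1 even, = t + t with t ≥ 1
        obtain ⟨t, ht⟩ := he
        have ht1 : 1 ≤ t := by omega
        have hm : (k + 1 + 1) / 2 = t := by omega
        rw [if_neg (by simp [Nat.odd_iff]; omega), hm] at IH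
        have hsplit : Finset.Icc (t + 1) (k + 1) = insert (t + 1) (Finset.Icc (t + 2) (k + 1)) := by
          ext x; simp; omega
        rw [hsplit, Finset.sum_insert (by simp), zero_add] at IH
        set S := ∑ i ∈ Finset.Icc (t + 2) (k + 1), ({p i, p i} : Multiset ℝ) with hS
        have hIH : greedyGaps p (k + 1) = p (t + 1) ::ₘ p (t + 1) ::ₘ S := by
          rw [IH]; refine Multiset.ext.2 fun c => ?_
          simp [Multiset.count_cons, Multiset.count_singleton]
        have hbound : ∀ y ∈ p (t + 1) ::ₘ S, y ≤ p (t + 1) := by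
          intro y hy
          rcases Multiset.mem_cons.1 hy with rfl | hy
          · exact le_refl _
          · obtain ⟨i, hi, hyi⟩ := Multiset.mem_sum.1 hy
            simp only [Finset.mem_Icc] at hi
            have hyp : y = p i := by
              rcases Multiset.mem_cons.1 hyi with rfl | h2
              · rfl
              · simpa using h2
            rw [hyp]
            exact hsort (t + 1) i (by omega) (by omega) (by omega)
        have hpt : 0 < p (t + 1) := hpos (t + 1) (by omega) (by omega)
        have hfold : (greedyGaps p (k + 1)).fold max 0 = p (t + 1) := by
          rw [hIH]; exact fold_max_eq' _ _ hpt.le hbound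
        have hrat : p (t + 1) ≤ 2 * p (k + 2) := by
          have := hratio (k + 2) (by omega) (by omega)
          have h2 : (k + 2 + 1) / 2 = t + 1 := by omega
          rwa [h2] at this
        have hmax : max (p (k + 2)) (p (t + 1) - p (k + 2)) = p (k + 2) :=
          max_eq_left (by linarith)
        rw [hunf, hfold, hIH, hmax, Multiset.erase_cons_head]
        -- goal: p(k+2) ::ₘ p(k+2) ::ₘ p(t+1) ::ₘ S = {p(t+1)} + ∑ Icc (t+2) (k+2)
        have hodd : Odd (k + 1 + 1) := by rw [Nat.odd_iff]; omega
        rw [if_pos hodd, show (k + 1 + 1 + 1) / 2 = t + 1 by omega,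
          show (k + 1 + 1) = (k + 1) + 1 by rfl,
          Finset.sum_Icc_succ_top (by omega : t + 2 ≤ k + 1 + 1), ← hS]
        refine Multiset.ext.2 fun c => ?_
        simp [Multiset.count_cons, Multiset.count_singleton]
        all_goals split_ifs <;> omega
      · -- k+1 odd, = 2t+1
        obtain ⟨t, ht⟩ := ho
        have hm : (k + 1 + 1) / 2 = t + 1 := by omega
        rw [if_pos (by rw [Nat.odd_iff]; omega), hm] at IH
        set S := ∑ i ∈ Finset.Icc (t + 2) (k + 1), ({p i, p i} : Multiset ℝ) with hS
        have hIH : greedyGaps p (k + 1) = p (t + 1) ::ₘ S := by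
          rw [IH]; refine Multiset.ext.2 fun c => ?_
          simp [Multiset.count_cons, Multiset.count_singleton]
        have hbound : ∀ y ∈ S, y ≤ p (t + 1) := by
          intro y hy
          obtain ⟨i, hi, hyi⟩ := Multiset.mem_sum.1 hy
          simp only [Finset.mem_Icc] at hi
          have hyp : y = p i := by
            rcases Multiset.mem_cons.1 hyi with rfl | h2
            · rfl
            · simpa using h2
          rw [hyp]
          exact hsort (t + 1) i (by omega) (by omega) (by omega)
        have hpt : 0 < p (t + 1) := hpos (t + 1) (by omega) (by omega)
        have hfold : (greedyGaps p (k + 1)).fold max 0 = p (t + 1) := by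
          rw [hIH]; exact fold_max_eq' _ _ hpt.le hbound
        have hrat : p (t + 1) ≤ 2 * p (k + 2) := by
          have := hratio (k + 2) (by omega) (by omega)
          have h2 : (k + 2 + 1) / 2 = t + 1 := by omega
          rwa [h2] at this
        have hmax : max (p (k + 2)) (p (t + 1) - p (k + 2)) = p (k + 2) :=
          max_eq_left (by linarith)
        rw [hunf, hfold, hIH, hmax, Multiset.erase_cons_head]
        -- goal: p(k+2) ::ₘ p(k+2) ::ₘ S = 0 + ∑ Icc (t+2) (k+2)
        have heven : ¬ Odd (k + 1 + 1) := by rw [Nat.odd_iff]; omega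
        rw [if_neg heven, show (k + 1 + 1 + 1) / 2 = t + 1 by omega, zero_add,
          show (k + 1 + 1) = (k + 1) + 1 by rfl,
          Finset.sum_Icc_succ_top (by omega : t + 2 ≤ k + 1 + 1), ← hS]
        refine Multiset.ext.2 fun c => ?_
        simp [Multiset.count_cons, Multiset.count_singleton]
        all_goals split_ifs <;> omega
end

section
/- Let n ≥ 1, let D ≥ 4 and M ≥ 5D/4 be integers, and let a_1, ..., a_n, b_1, ..., b_n, c_1, ..., c_n be integers with D/4 < a_i, b_i, c_i < D/2 for all i and with Σ_{i=1}^n (a_i + b_i + c_i) = nD. Consider the TS instance consisting of 5n jobs: n jobs of size 8M + 5D, n jobs of size 4M, and for every i one job of size 2M + 2a_i + D, one job of size 2M + b_i, and one job of size M + c_i + D. If there exist permutations σ and τ of {1, ..., n} such that a_i + b_{σ(i)} + c_{τ(i)} = D for all i, then this TS instance admits a feasible schedule of makespan n(8M + 5D). -/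
/-- The sizes of the `5n` jobs of the reduction instance: for each `i : Fin n`, one job
of each of the sizes `8M + 5D`, `4M`, `2M + 2aᵢ + D`, `2M + bᵢ`, `M + cᵢ + D`. -/
noncomputable def jobSize {n : ℕ} (M D : ℤ) (a b c : Fin n → ℤ) (i : Fin n) :
    Fin 5 → ℝ :=
  ![((8 * M + 5 * D : ℤ) : ℝ), ((4 * M : ℤ) : ℝ), ((2 * M + 2 * a i + D : ℤ) : ℝ),
    ((2 * M + b i : ℤ) : ℝ), ((M + c i + D : ℤ) : ℝ)]

/-- The block to which each of the five kinds of jobs is assigned: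
jobs `(i,0)`, `(i,1)`, `(i,2)` go to block `i`, job `(i,3)` to block `σ⁻¹ i`,
job `(i,4)` to block `τ⁻¹ i`. -/
def blk {n : ℕ} (σ τ : Equiv.Perm (Fin n)) (i : Fin n) : Fin 5 → Fin n :=
  ![i, i, i, σ.symm i, τ.symm i]

/-- The index of the job occupying slot `k` of block `j`. -/
def slt {n : ℕ} (σ τ : Equiv.Perm (Fin n)) (j : Fin n) : Fin 5 → Fin n :=
  ![j, j, j, σ j, τ j]

/-- Canonical offsets (within a block of length `8M+5D`) for a block whose
triple is `(α, β, γ)`. -/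
noncomputable def Ovec (M D α β γ : ℝ) : Fin 5 → ℝ :=
  ![0, (2*M+2*α+D) + 2*(M+γ+D), 2*M+2*α+D, (8*M+5*D) - (2*M+β), (2*M+2*α+D) + (M+γ+D)]

/-- Canonical job sizes for a block whose triple is `(α, β, γ)`. -/
noncomputable def Svec (M D α β γ : ℝ) : Fin 5 → ℝ :=
  ![8*M+5*D, 4*M, 2*M+2*α+D, 2*M+β, M+γ+D]

/-- Separation of the five jobs of a single block. -/
lemma sep_block (M D α β γ : ℝ) (hD : 4 ≤ D) (hM : 5*D/4 ≤ M)
    (hα1 : D/4 < α) (hα2 : α < D/2) (hβ1 : D/4 < β) (hβ2 : β < D/2)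
    (hγ1 : D/4 < γ) (hγ2 : γ < D/2) (hsum : α + β + γ = D)
    (k k' : Fin 5) (hkk' : k ≠ k') :
    min (Svec M D α β γ k) (Svec M D α β γ k')
      ≤ |Ovec M D α β γ k - Ovec M D α β γ k'| := by
  fin_cases k <;> fin_cases k' <;>
    simp only [Svec, Ovec, Fin.reduceFinMk, Matrix.cons_val_zero, Matrix.cons_val_one,
      Matrix.head_cons, Matrix.cons_val_two, Matrix.tail_cons, Matrix.cons_val_three,
      Matrix.cons_val_four, Nat.succ_eq_add_one, Nat.reduceAdd] <;>
  first
  | exact absurd rfl hkk'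
  | exact min_le_of_left_le (le_abs.mpr (Or.inl (by linarith)))
  | exact min_le_of_left_le (le_abs.mpr (Or.inr (by linarith)))
  | exact min_le_of_right_le (le_abs.mpr (Or.inl (by linarith)))
  | exact min_le_of_right_le (le_abs.mpr (Or.inr (by linarith)))

/-- Every job stays within its block. -/
lemma block_bounds (M D α β γ : ℝ) (hD : 4 ≤ D) (hM : 5*D/4 ≤ M)
    (hα1 : D/4 < α) (hα2 : α < D/2) (hβ1 : D/4 < β) (hβ2 : β < D/2)
    (hγ1 : D/4 < γ) (hγ2 : γ < D/2) (k : Fin 5) :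
    0 ≤ Ovec M D α β γ k ∧ Ovec M D α β γ k + Svec M D α β γ k ≤ 8*M+5*D := by
  fin_cases k <;>
    simp only [Svec, Ovec, Fin.reduceFinMk, Matrix.cons_val_zero, Matrix.cons_val_one,
      Matrix.head_cons, Matrix.cons_val_two, Matrix.tail_cons, Matrix.cons_val_three,
      Matrix.cons_val_four, Nat.succ_eq_add_one, Nat.reduceAdd] <;>
  exact ⟨by linarith, by linarith⟩

/-- easy direction of the reduction: if the numerical 3-dimensional
matching instance has a solution, then the TS instance of the reduction admits a
feasible schedule of makespan `n (8M + 5D)`. -/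
theorem stmt10 (n : ℕ) (hn : 1 ≤ n) (M D : ℤ) (hD : 4 ≤ D)
    (hM : 5 * (D : ℝ) / 4 ≤ (M : ℝ))
    (a b c : Fin n → ℤ)
    (ha : ∀ i, (D : ℝ) / 4 < (a i : ℝ) ∧ (a i : ℝ) < (D : ℝ) / 2)
    (hb : ∀ i, (D : ℝ) / 4 < (b i : ℝ) ∧ (b i : ℝ) < (D : ℝ) / 2)
    (hc : ∀ i, (D : ℝ) / 4 < (c i : ℝ) ∧ (c i : ℝ) < (D : ℝ) / 2)
    (hsum : ∑ i, (a i + b i + c i) = n * D)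
    (σ τ : Equiv.Perm (Fin n))
    (hmatch : ∀ i, a i + b (σ i) + c (τ i) = D) :
    ∃ s : Fin n → Fin 5 → ℝ,
      (∀ i k, 0 ≤ s i k) ∧
      (∀ i k i' k', (i, k) ≠ (i', k') →
        min (jobSize M D a b c i k) (jobSize M D a b c i' k')
          ≤ |s i k - s i' k'|) ∧
      sSup (Set.range fun jk : Fin n × Fin 5 =>
          s jk.1 jk.2 + jobSize M D a b c jk.1 jk.2)
        = (n : ℝ) * (8 * (M : ℝ) + 5 * (D : ℝ)) := by
  classical
  have hDr : (4 : ℝ) ≤ (D : ℝ) := by exact_mod_cast hD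
  have hL0 : (0 : ℝ) < 8 * (M : ℝ) + 5 * (D : ℝ) := by linarith
  -- the offset of job (i,k) inside its block, and its size
  set O : Fin n → Fin 5 → ℝ := fun j =>
    Ovec (M : ℝ) (D : ℝ) ((a j : ℤ) : ℝ) ((b (σ j) : ℤ) : ℝ) ((c (τ j) : ℤ) : ℝ) with hO
  set S : Fin n → Fin 5 → ℝ := fun j =>
    Svec (M : ℝ) (D : ℝ) ((a j : ℤ) : ℝ) ((b (σ j) : ℤ) : ℝ) ((c (τ j) : ℤ) : ℝ) with hS
  -- relating blk and slt
  have hslt : ∀ i k, slt σ τ (blk σ τ i k) k = i := by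
    intro i k
    fin_cases k <;> simp [slt, blk]
  have hinj : ∀ i i' (k : Fin 5), blk σ τ i k = blk σ τ i' k → i = i' := by
    intro i i' k h
    have := congrArg (fun j => slt σ τ j k) h
    simpa [hslt] using this
  -- jobSize in canonical form
  have hsize : ∀ i k, jobSize M D a b c i k = S (blk σ τ i k) k := by
    intro i k
    fin_cases k <;>
      simp [jobSize, S, Svec, blk, Equiv.apply_symm_apply] <;> push_cast <;> ring
  -- basic bounds on a block
  have hbd : ∀ (j : Fin n) (k : Fin 5),
      0 ≤ O j k ∧ O j k + S j k ≤ 8 * (M : ℝ) + 5 * (D : ℝ) := by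
    intro j k
    exact block_bounds _ _ _ _ _ hDr hM (ha j).1 (ha j).2 (hb (σ j)).1 (hb (σ j)).2
      (hc (τ j)).1 (hc (τ j)).2 k
  -- the schedule
  refine ⟨fun i k => ((blk σ τ i k : Fin n) : ℕ) * (8 * (M : ℝ) + 5 * (D : ℝ))
      + O (blk σ τ i k) k, ?_, ?_, ?_⟩
  · intro i k
    have h1 := (hbd (blk σ τ i k) k).1
    positivity
  · -- feasibility
    intro i k i' k' hne
    beta_reduce
    rw [hsize i k, hsize i' k']
    by_cases hblk : blk σ τ i k = blk σ τ i' k'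
    · -- same block
      have hk : k ≠ k' := by
        rintro rfl
        exact hne (by rw [hinj i i' k hblk])
      have heq : ((blk σ τ i k : Fin n) : ℕ) * (8 * (M : ℝ) + 5 * (D : ℝ))
            + O (blk σ τ i k) k
            - (((blk σ τ i' k' : Fin n) : ℕ) * (8 * (M : ℝ) + 5 * (D : ℝ))
            + O (blk σ τ i' k') k')
          = O (blk σ τ i k) k - O (blk σ τ i k) k' := by
        rw [← hblk]; ring
      rw [heq, ← hblk]
      set j := blk σ τ i k with hj
      have hmr : ((a j : ℤ) : ℝ) + ((b (σ j) : ℤ) : ℝ) + ((c (τ j) : ℤ) : ℝ) = (D : ℝ) := by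
        exact_mod_cast hmatch j
      exact sep_block (M : ℝ) (D : ℝ) _ _ _ hDr hM (ha j).1 (ha j).2 (hb (σ j)).1
        (hb (σ j)).2 (hc (τ j)).1 (hc (τ j)).2 hmr k k' hk
    · -- different blocks
      have hne' : ((blk σ τ i k : Fin n) : ℕ) ≠ ((blk σ τ i' k' : Fin n) : ℕ) := by
        simpa [Fin.val_inj] using hblk
      have key : ∀ (p q : Fin n) (kp kq : Fin 5), ((p : ℕ) : ℝ) + 1 ≤ ((q : ℕ) : ℝ) →
          S p kp ≤ ((q : ℕ) : ℝ) * (8 * (M : ℝ) + 5 * (D : ℝ)) + O q kq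
            - (((p : ℕ) : ℝ) * (8 * (M : ℝ) + 5 * (D : ℝ)) + O p kp) := by
        intro p q kp kq hpq
        have h1 := (hbd p kp).2
        have h2 := (hbd q kq).1
        have h3 : (((p : ℕ) : ℝ) + 1) * (8 * (M : ℝ) + 5 * (D : ℝ))
            ≤ ((q : ℕ) : ℝ) * (8 * (M : ℝ) + 5 * (D : ℝ)) :=
          mul_le_mul_of_nonneg_right hpq hL0.le
        nlinarith
      rcases lt_or_gt_of_ne hne' with hlt | hlt
      · have hpq : (((blk σ τ i k : Fin n) : ℕ) : ℝ) + 1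
            ≤ (((blk σ τ i' k' : Fin n) : ℕ) : ℝ) := by exact_mod_cast hlt
        refine min_le_of_left_le (le_abs.mpr (Or.inr ?_))
        have := key _ _ k k' hpq
        linarith
      · have hpq : (((blk σ τ i' k' : Fin n) : ℕ) : ℝ) + 1
            ≤ (((blk σ τ i k : Fin n) : ℕ) : ℝ) := by exact_mod_cast hlt
        refine min_le_of_right_le (le_abs.mpr (Or.inl ?_))
        have := key _ _ k' k hpq
        linarith
  · -- makespan
    apply IsGreatest.csSup_eq
    constructor
    · -- the value is attained by the big job of the last block
      refine ⟨(⟨n - 1, by omega⟩, 0), ?_⟩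
      have hblk0 : blk σ τ (⟨n - 1, by omega⟩ : Fin n) 0 = ⟨n - 1, by omega⟩ := by
        simp [blk]
      have hO0 : O (⟨n - 1, by omega⟩ : Fin n) 0 = 0 := by simp [O, Ovec]
      have hjs : jobSize M D a b c (⟨n - 1, by omega⟩ : Fin n) 0
          = 8 * (M : ℝ) + 5 * (D : ℝ) := by
        simp only [jobSize, Matrix.cons_val_zero]
        push_cast
        ring
      simp only [hblk0, hO0, hjs]
      have : (((n - 1 : ℕ) : ℝ)) = (n : ℝ) - 1 := by
        have : (1 : ℕ) ≤ n := hn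
        push_cast [Nat.cast_sub this]
        ring
      rw [this]
      ring
    · rintro x ⟨⟨i, k⟩, rfl⟩
      simp only
      rw [hsize i k]
      have h1 := (hbd (blk σ τ i k) k).2
      have h2 : (((blk σ τ i k : Fin n) : ℕ) : ℝ) + 1 ≤ (n : ℝ) := by
        exact_mod_cast (blk σ τ i k).isLt
      have h3 : ((((blk σ τ i k : Fin n) : ℕ) : ℝ) + 1) * (8 * (M : ℝ) + 5 * (D : ℝ))
          ≤ (n : ℝ) * (8 * (M : ℝ) + 5 * (D : ℝ)) :=
        mul_le_mul_of_nonneg_right h2 hL0.le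
      nlinarith
end

section
/- Let ε > 0 and let p_1 ≥ p_2 ≥ ... ≥ p_n > 0 be a TS instance. Let q be the sub-instance consisting of those jobs i with p_i ≥ ε·p_1/n. Then OPT(q) ≤ OPT(p) ≤ OPT(q) + ε·p_1; in particular, since OPT(p) ≥ p_1, discarding all jobs of size less than ε·p_1/n and appending them at the end of an optimal schedule for q increases the makespan by at most a factor 1+ε. -/
lemma le_makespan (m : ℕ) (p s : ℕ → ℝ) {j : ℕ} (h1 : 1 ≤ j) (h2 : j ≤ m) :
    s j + p j ≤ makespan m p s := by
  apply le_csSup ((Set.finite_Icc 1 m |>.image _).bddAbove)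
  exact ⟨j, ⟨h1, h2⟩, rfl⟩

lemma makespan_le (m : ℕ) (hm : 1 ≤ m) (p s : ℕ → ℝ) {B : ℝ}
    (h : ∀ j, 1 ≤ j → j ≤ m → s j + p j ≤ B) : makespan m p s ≤ B := by
  have hne : (Set.Icc 1 m).Nonempty := ⟨1, le_refl 1, hm⟩
  apply csSup_le (hne.image _)
  rintro x ⟨j, ⟨h1, h2⟩, rfl⟩; exact h j h1 h2

lemma makespan_zero (p s : ℕ → ℝ) : makespan 0 p s = 0 := by
  unfold makespan
  rw [Set.Icc_eq_empty (by norm_num), Set.image_empty, Real.sSup_empty]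

/-- let `q` be the sub-instance consisting of the jobs `i` with
`p i ≥ ε · p 1 / n`; since `p` is sorted, these are the jobs `1, …, k` for some `k`, so
`q` is `p` restricted to `Icc 1 k`. Then `OPT q ≤ OPT p ≤ OPT q + ε · p 1`; in
particular (since `OPT p ≥ p 1`) discarding the small jobs and appending them at the end
increases the makespan by at most a factor `1 + ε`. -/
theorem stmt16 (n : ℕ) (hn : 1 ≤ n) (ε : ℝ) (hε : 0 < ε) (p : ℕ → ℝ)
    (hsort : ∀ i j, 1 ≤ i → i ≤ j → j ≤ n → p j ≤ p i)
    (hpos : ∀ i, 1 ≤ i → i ≤ n → 0 < p i)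
    (k : ℕ) (hkn : k ≤ n)
    (hk : ∀ i, 1 ≤ i → i ≤ n → (ε * p 1 / n ≤ p i ↔ i ≤ k)) :
    p 1 ≤ OPT n p ∧ OPT k p ≤ OPT n p ∧ OPT n p ≤ OPT k p + ε * p 1 := by
  have hp1 : 0 < p 1 := hpos 1 le_rfl hn
  have hεp1 : 0 ≤ ε * p 1 := le_of_lt (mul_pos hε hp1)
  -- a trivial feasible schedule
  set s0 : ℕ → ℝ := fun j => (j : ℝ) * p 1 with hs0
  have feas0 : ∀ m, m ≤ n → Feasible m p s0 := by
    intro m hmn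
    constructor
    · intro j h1 _; positivity
    · intro i j h1i him h1j hjm hij
      have hip : p i ≤ p 1 := hsort 1 i le_rfl h1i (him.trans hmn)
      have habs : (1 : ℝ) ≤ |(i : ℝ) - (j : ℝ)| := by
        have hz : (1:ℤ) ≤ |(i:ℤ) - (j:ℤ)| := by
          rcases abs_cases ((i:ℤ) - j) with ⟨he, _⟩ | ⟨he, _⟩ <;> omega
        exact_mod_cast hz
      have : s0 i - s0 j = ((i : ℝ) - j) * p 1 := by simp [hs0]; ring
      rw [this, abs_mul, abs_of_pos hp1]
      calc min (p i) (p j) ≤ p i := min_le_left _ _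
        _ ≤ p 1 := hip
        _ = 1 * p 1 := (one_mul _).symm
        _ ≤ |(i : ℝ) - (j : ℝ)| * p 1 := by
            exact mul_le_mul_of_nonneg_right habs hp1.le
  -- makespan nonneg for feasible schedules
  have msnn : ∀ m, m ≤ n → ∀ s : ℕ → ℝ, Feasible m p s → 0 ≤ makespan m p s := by
    intro m hmn s hs
    rcases Nat.eq_zero_or_pos m with h0 | h1
    · rw [h0, makespan_zero]
    · have hmk := le_makespan m p s h1 (le_refl m)
      have h1s : 0 ≤ s m := hs.1 m h1 le_rfl
      have hpm := hpos m h1 hmn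
      linarith
  have bddB : ∀ m, m ≤ n → BddBelow {T | ∃ s : ℕ → ℝ, Feasible m p s ∧ makespan m p s = T} := by
    intro m hmn
    exact ⟨0, by rintro T ⟨s, hs, rfl⟩; exact msnn m hmn s hs⟩
  have hSne : ∀ m, m ≤ n → Set.Nonempty {T | ∃ s : ℕ → ℝ, Feasible m p s ∧ makespan m p s = T} :=
    fun m hmn => ⟨makespan m p s0, s0, feas0 m hmn, rfl⟩
  -- Part 1
  have part1 : p 1 ≤ OPT n p := by
    apply le_csInf (hSne n le_rfl)
    rintro T ⟨s, hs, rfl⟩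
    have := le_makespan n p s le_rfl hn
    have := hs.1 1 le_rfl hn
    linarith
  -- Part 2
  have part2 : OPT k p ≤ OPT n p := by
    apply le_csInf (hSne n le_rfl)
    rintro T ⟨s, hs, rfl⟩
    have hfk : Feasible k p s :=
      ⟨fun j h1 h2 => hs.1 j h1 (h2.trans hkn),
       fun i j h1i hik h1j hjk hij => hs.2 i j h1i (hik.trans hkn) h1j (hjk.trans hkn) hij⟩
    have hle : makespan k p s ≤ makespan n p s := by
      rcases Nat.eq_zero_or_pos k with h0 | h1
      · rw [h0, makespan_zero]; exact msnn n le_rfl s hs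
      · exact makespan_le k h1 p s fun j hj1 hjk => le_makespan n p s hj1 (hjk.trans hkn)
    exact le_trans (csInf_le (bddB k hkn) ⟨s, hfk, rfl⟩) hle
  -- sum of small jobs is at most ε * p 1
  have hsum : ∑ j ∈ Finset.Icc (k+1) n, p j ≤ ε * p 1 := by
    have hbound : ∀ j ∈ Finset.Icc (k+1) n, p j ≤ ε * p 1 / n := by
      intro j hj
      rw [Finset.mem_Icc] at hj
      have h1j : 1 ≤ j := le_trans (Nat.le_add_left 1 k) hj.1
      have := (hk j h1j hj.2).not.mpr (by omega)
      linarith [not_le.mp this]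
    calc ∑ j ∈ Finset.Icc (k+1) n, p j ≤ (Finset.Icc (k+1) n).card • (ε * p 1 / n) :=
          Finset.sum_le_card_nsmul _ _ _ hbound
      _ = ((n - k : ℕ) : ℝ) * (ε * p 1 / n) := by
          rw [Nat.card_Icc, nsmul_eq_mul]
          have : n + 1 - (k+1) = n - k := by omega
          rw [this]
      _ ≤ (n : ℝ) * (ε * p 1 / n) := by
          apply mul_le_mul_of_nonneg_right _ (by positivity)
          exact_mod_cast Nat.sub_le n k
      _ = ε * p 1 := by
          field_simp
  -- Part 3
  have part3 : OPT n p ≤ OPT k p + ε * p 1 := by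
    have key : ∀ T ∈ {T | ∃ s : ℕ → ℝ, Feasible k p s ∧ makespan k p s = T},
        OPT n p ≤ T + ε * p 1 := by
      rintro T ⟨s, hs, rfl⟩
      set M := makespan k p s with hM
      have hM0 : 0 ≤ M := msnn k hkn s hs
      have hMub : ∀ i, 1 ≤ i → i ≤ k → s i + p i ≤ M := fun i h1 h2 => le_makespan k p s h1 h2
      set s' : ℕ → ℝ := fun i => if i ≤ k then s i else M + ∑ j ∈ Finset.Icc (k+1) (i-1), p j
        with hs'
      have sumnn : ∀ b : ℕ, b ≤ n → 0 ≤ ∑ j ∈ Finset.Icc (k+1) b, p j := by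
        intro b hb
        apply Finset.sum_nonneg
        intro j hj
        rw [Finset.mem_Icc] at hj
        exact (hpos j (by omega) (by omega)).le
      -- directed separation for i < j with k < j
      have key2 : ∀ i j : ℕ, 1 ≤ i → i < j → j ≤ n → k < j → min (p i) (p j) ≤ s' j - s' i := by
        intro i j h1i hij hjn hkj
        have hs'j : s' j = M + ∑ l ∈ Finset.Icc (k+1) (j-1), p l := by
          simp only [hs']; rw [if_neg (by omega)]
        rcases le_or_gt i k with hik | hik
        · have hs'i : s' i = s i := by simp only [hs']; rw [if_pos hik]
          have h1 : s i + p i ≤ M := hMub i h1i hik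
          have h2 : 0 ≤ ∑ l ∈ Finset.Icc (k+1) (j-1), p l := sumnn _ (by omega)
          have : min (p i) (p j) ≤ p i := min_le_left _ _
          rw [hs'j, hs'i]; linarith
        · have hs'i : s' i = M + ∑ l ∈ Finset.Icc (k+1) (i-1), p l := by
            simp only [hs']; rw [if_neg (by omega)]
          have hsplit : ∑ l ∈ Finset.Ioc k (i-1), p l + ∑ l ∈ Finset.Ioc (i-1) (j-1), p l
              = ∑ l ∈ Finset.Ioc k (j-1), p l :=
            Finset.sum_Ioc_consecutive _ (by omega) (by omega)
          have hIcc : ∀ m : ℕ, Finset.Icc (k+1) m = Finset.Ioc k m := by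
            intro m; rw [← Finset.Icc_add_one_left_eq_Ioc]
          have hmem : i ∈ Finset.Ioc (i-1) (j-1) := by rw [Finset.mem_Ioc]; omega
          have hsingle : p i ≤ ∑ l ∈ Finset.Ioc (i-1) (j-1), p l := by
            apply Finset.single_le_sum (f := p) _ hmem
            intro l hl
            rw [Finset.mem_Ioc] at hl
            exact (hpos l (by omega) (by omega)).le
          have : min (p i) (p j) ≤ p i := min_le_left _ _
          rw [hs'j, hs'i, hIcc, hIcc]
          linarith
      have hfeas : Feasible n p s' := by
        constructor
        · intro j h1 h2
          simp only [hs']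
          split
          · exact hs.1 j h1 (by omega)
          · have := sumnn (j-1) (by omega); linarith
        · intro i j h1i hin h1j hjn hij
          rcases le_or_gt i k with hik | hik <;> rcases le_or_gt j k with hjk | hjk
          · have hs'i : s' i = s i := by simp only [hs']; rw [if_pos hik]
            have hs'j : s' j = s j := by simp only [hs']; rw [if_pos hjk]
            rw [hs'i, hs'j]
            exact hs.2 i j h1i hik h1j hjk hij
          · have h := key2 i j h1i (by omega) hjn hjk
            calc min (p i) (p j) ≤ s' j - s' i := h
              _ ≤ |s' j - s' i| := le_abs_self _
              _ = |s' i - s' j| := abs_sub_comm _ _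
          · have h := key2 j i h1j (by omega) hin hik
            calc min (p i) (p j) = min (p j) (p i) := min_comm _ _
              _ ≤ s' i - s' j := h
              _ ≤ |s' i - s' j| := le_abs_self _
          · rcases Nat.lt_or_ge i j with h | h
            · have h' := key2 i j h1i h hjn hjk
              calc min (p i) (p j) ≤ s' j - s' i := h'
                _ ≤ |s' j - s' i| := le_abs_self _
                _ = |s' i - s' j| := abs_sub_comm _ _
            · have hji : j < i := by omega
              have h' := key2 j i h1j hji hin hik
              calc min (p i) (p j) = min (p j) (p i) := min_comm _ _
                _ ≤ s' i - s' j := h'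
                _ ≤ |s' i - s' j| := le_abs_self _
      have hms : makespan n p s' ≤ M + ε * p 1 := by
        apply makespan_le n hn
        intro j h1 h2
        rcases le_or_gt j k with hjk | hjk
        · have hs'j : s' j = s j := by simp only [hs']; rw [if_pos hjk]
          have := hMub j h1 hjk
          rw [hs'j]; linarith
        · have hs'j : s' j = M + ∑ l ∈ Finset.Icc (k+1) (j-1), p l := by
            simp only [hs']; rw [if_neg (by omega)]
          have hstep : ∑ l ∈ Finset.Icc (k+1) (j-1), p l + p j = ∑ l ∈ Finset.Icc (k+1) j, p l := by
            have : Finset.Icc (k+1) j = insert j (Finset.Icc (k+1) (j-1)) := by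
              ext x; simp only [Finset.mem_Icc, Finset.mem_insert]; omega
            rw [this, Finset.sum_insert (by rw [Finset.mem_Icc]; omega)]
            ring
          have hsub : ∑ l ∈ Finset.Icc (k+1) j, p l ≤ ∑ l ∈ Finset.Icc (k+1) n, p l := by
            apply Finset.sum_le_sum_of_subset_of_nonneg
            · apply Finset.Icc_subset_Icc_right h2
            · intro l hl _
              rw [Finset.mem_Icc] at hl
              exact (hpos l (by omega) (by omega)).le
          rw [hs'j]
          linarith
      calc OPT n p ≤ makespan n p s' := csInf_le (bddB n le_rfl) ⟨s', hfeas, rfl⟩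
        _ ≤ M + ε * p 1 := hms
    have : OPT n p - ε * p 1 ≤ OPT k p := by
      apply le_csInf (hSne k hkn)
      intro T hT
      linarith [key T hT]
    linarith
  exact ⟨part1, part2, part3⟩
end

section
/- Let p_1 ≥ p_2 ≥ ... ≥ p_n > 0 be a TS instance, let K > 0, and let s be a feasible schedule with makespan T. Then there exists a feasible schedule s' in which every start time s'_j is a nonnegative integer multiple of K and whose makespan is at most T + nK; consequently, restricting start times to multiples of K increases the optimal makespan by at most nK. -/
/-- for any `K > 0` and any feasible schedule `s` with makespan `T`, there
is a feasible schedule `s'` whose start times are all nonnegative integer multiples of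
`K` and whose makespan is at most `T + nK`. -/
theorem stmt17 (n : ℕ) (hn : 1 ≤ n) (p : ℕ → ℝ)
    (hsort : ∀ i j, 1 ≤ i → i ≤ j → j ≤ n → p j ≤ p i)
    (hpos : ∀ i, 1 ≤ i → i ≤ n → 0 < p i)
    (K : ℝ) (hK : 0 < K)
    (s : ℕ → ℝ) (hs : Feasible n p s)
    (T : ℝ) (hT : makespan n p s = T) :
    ∃ s' : ℕ → ℝ, Feasible n p s' ∧
      (∀ j, 1 ≤ j → j ≤ n → ∃ m : ℕ, s' j = m * K) ∧
      makespan n p s' ≤ T + n * K := by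
  classical
  obtain ⟨hs0, hsep⟩ := hs
  set r : ℕ → ℕ := fun j => ((Finset.Icc 1 n).filter (fun i => s i < s j)).card with hr
  set m : ℕ → ℕ := fun j => (⌈s j / K⌉).toNat + r j with hm
  set s' : ℕ → ℝ := fun j => (m j : ℝ) * K with hs'
  -- ceil cast facts
  have hceil : ∀ j, 1 ≤ j → j ≤ n → ((⌈s j / K⌉).toNat : ℝ) = (⌈s j / K⌉ : ℝ) := by
    intro j h1 h2
    have : (0:ℤ) ≤ ⌈s j / K⌉ := Int.ceil_nonneg (div_nonneg (hs0 j h1 h2) hK.le)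
    exact_mod_cast congrArg (Int.cast : ℤ → ℝ) (Int.toNat_of_nonneg this)
  -- r monotone strictly along s
  have hrmono : ∀ i j, 1 ≤ i → i ≤ n → 1 ≤ j → j ≤ n → s i < s j → r i < r j := by
    intro i j hi1 hi2 hj1 hj2 hij
    apply Finset.card_lt_card
    rw [Finset.ssubset_iff_of_subset]
    · exact ⟨i, Finset.mem_filter.2 ⟨Finset.mem_Icc.2 ⟨hi1, hi2⟩, hij⟩,
        fun h => lt_irrefl _ (Finset.mem_filter.1 h).2⟩
    · intro k hk
      rcases Finset.mem_filter.1 hk with ⟨hk1, hk2⟩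
      exact Finset.mem_filter.2 ⟨hk1, hk2.trans hij⟩
  -- key separation
  have key : ∀ i j, 1 ≤ i → i ≤ n → 1 ≤ j → j ≤ n → s i < s j →
      s j - s i ≤ s' j - s' i := by
    intro i j hi1 hi2 hj1 hj2 hij
    have h1 : ((r i : ℝ) + 1) ≤ (r j : ℝ) := by
      exact_mod_cast hrmono i j hi1 hi2 hj1 hj2 hij
    have h2 : s j / K ≤ (⌈s j / K⌉ : ℝ) := Int.le_ceil _
    have h3 : ((⌈s i / K⌉ : ℤ) : ℝ) < s i / K + 1 := Int.ceil_lt_add_one _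
    have hdiff : (s j - s i) / K ≤ (m j : ℝ) - (m i : ℝ) := by
      simp only [hm]
      push_cast
      rw [hceil i hi1 hi2, hceil j hj1 hj2]
      have : (s j - s i) / K = s j / K - s i / K := by ring
      rw [this]
      linarith
    have := mul_le_mul_of_nonneg_right hdiff hK.le
    rwa [div_mul_cancel₀ _ hK.ne', sub_mul] at this
  have hsle : ∀ j, 1 ≤ j → j ≤ n → s' j ≤ s j + n * K := by
    intro j hj1 hj2
    have hrlt : r j < n := by
      have : r j < (Finset.Icc 1 n).card := by
        apply Finset.card_lt_card
        rw [Finset.ssubset_iff_of_subset (Finset.filter_subset _ _)]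
        exact ⟨j, Finset.mem_Icc.2 ⟨hj1, hj2⟩, fun h => lt_irrefl _ (Finset.mem_filter.1 h).2⟩
      simpa [Nat.card_Icc] using this
    have h3 : ((⌈s j / K⌉ : ℤ) : ℝ) < s j / K + 1 := Int.ceil_lt_add_one _
    have h4 : ((r j : ℝ) + 1) ≤ (n : ℝ) := by exact_mod_cast hrlt
    have hmj : (m j : ℝ) ≤ s j / K + n := by
      simp only [hm]; push_cast; rw [hceil j hj1 hj2]; linarith
    have := mul_le_mul_of_nonneg_right hmj hK.le
    calc s' j = (m j : ℝ) * K := rfl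
      _ ≤ (s j / K + n) * K := this
      _ = s j + n * K := by field_simp
  have hfin : ((fun j => s j + p j) '' Set.Icc 1 n).Finite :=
    (Set.finite_Icc 1 n).image _
  have hsT : ∀ j, 1 ≤ j → j ≤ n → s j + p j ≤ T := by
    intro j hj1 hj2
    rw [← hT]
    exact le_csSup hfin.bddAbove ⟨j, Set.mem_Icc.2 ⟨hj1, hj2⟩, rfl⟩
  refine ⟨s', ⟨?_, ?_⟩, ?_, ?_⟩
  · intro j hj1 hj2
    exact mul_nonneg (Nat.cast_nonneg _) hK.le
  · intro i j hi1 hi2 hj1 hj2 hne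
    have hmin : 0 < min (p i) (p j) := lt_min (hpos i hi1 hi2) (hpos j hj1 hj2)
    have hne' : s i ≠ s j := by
      intro h
      have := hsep i j hi1 hi2 hj1 hj2 hne
      rw [h, sub_self, abs_zero] at this
      linarith
    have habs := hsep i j hi1 hi2 hj1 hj2 hne
    rcases lt_or_gt_of_ne hne' with hlt | hgt
    · have := key i j hi1 hi2 hj1 hj2 hlt
      have h2 : min (p i) (p j) ≤ s j - s i := by
        have heq : |s i - s j| = s j - s i := by
          rw [abs_sub_comm]; exact abs_of_pos (by linarith)
        linarith [habs, heq.le, heq.symm.le]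
      have : min (p i) (p j) ≤ s' j - s' i := by linarith
      calc min (p i) (p j) ≤ s' j - s' i := this
        _ ≤ |s' j - s' i| := le_abs_self _
        _ = |s' i - s' j| := abs_sub_comm _ _
    · have := key j i hj1 hj2 hi1 hi2 hgt
      have h2 : min (p i) (p j) ≤ s i - s j := by
        have : |s i - s j| = s i - s j := abs_of_pos (by linarith)
        linarith [habs, this.le]
      have : min (p i) (p j) ≤ s' i - s' j := by linarith
      calc min (p i) (p j) ≤ s' i - s' j := this
        _ ≤ |s' i - s' j| := le_abs_self _
  · intro j hj1 hj2
    exact ⟨m j, rfl⟩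
  · rw [makespan]
    apply csSup_le
    · exact ⟨s' 1 + p 1, 1, Set.mem_Icc.2 ⟨le_refl _, hn⟩, rfl⟩
    · rintro x ⟨j, hj, rfl⟩
      rcases Set.mem_Icc.1 hj with ⟨hj1, hj2⟩
      have := hsle j hj1 hj2
      have := hsT j hj1 hj2
      simp only
      linarith
end
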